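/- arXiv:1103.1063 — 2 statements merged into one kernel-verified Lean document; each statement's English description precedes it below -/
import Mathlib

section
/- Let f be an ergodic p.m.p. action of a countable group Γ on a standard Borel probability space (X, μ) that is not strongly ergodic. Then f weakly contains f × b, where b is the trivial (identity) action of Γ on two points with equal mass, i.e., the diagonal action of Γ on (X, μ) × ({0,1}, uniform measure) in which Γ acts trivially on the second coordinate. -/
open MeasureTheory Filter Topology

/-- A probability-measure-preserving action of a group `Γ` on `(X, μ)`. -/
def IsPMPAction {Γ X : Type*} [Group Γ] [MeasurableSpace X]
    (f : Γ → X → X) (μ : Measure X) : Prop :=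
  (∀ γ : Γ, MeasurePreserving (f γ) μ μ) ∧ (∀ x : X, f 1 x = x) ∧
    (∀ γ₁ γ₂ : Γ, ∀ x : X, f (γ₁ * γ₂) x = f γ₁ (f γ₂ x))

/-- The action is (essentially) free. -/
def IsFreeAction {Γ X : Type*} [MeasurableSpace X]
    (f : Γ → X → X) (μ : Measure X) : Prop :=
  ∀ᵐ x ∂μ, ∀ γ γ' : Γ, γ ≠ γ' → f γ x ≠ f γ' x

/-- `f` (acting on `(X, μ)`) weakly contains `g` (acting on `(Y, ν)`). -/
def WeaklyContains {Γ X Y : Type*} [MeasurableSpace X] [MeasurableSpace Y]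
    (f : Γ → X → X) (μ : Measure X) (g : Γ → Y → Y) (ν : Measure Y) : Prop :=
  ∀ (n : ℕ) (Ys : Fin n → Set Y), (∀ i, MeasurableSet (Ys i)) →
    ∀ (S : Finset Γ) (ε : ℝ), 0 < ε →
      ∃ Xs : Fin n → Set X, (∀ i, MeasurableSet (Xs i)) ∧
        ∀ i j : Fin n, ∀ γ ∈ S,
          |(μ (f γ '' Xs i ∩ Xs j)).toReal - (ν (g γ '' Ys i ∩ Ys j)).toReal| < ε

/-- The (left) shift action of `Γ` on `Γ → κ`. -/
def bernoulliShift {Γ κ : Type*} [Group Γ] (γ : Γ) (ω : Γ → κ) : Γ → κ :=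
  fun δ => ω (δ * γ)

/-- `ν` is the product (Bernoulli) measure on `Γ → κ` with one-dimensional marginal `κm`:
it is a probability measure giving every cylinder set the product of the marginals. -/
def IsBernoulliMeasure {Γ κ : Type*} [MeasurableSpace κ]
    (κm : Measure κ) (ν : Measure (Γ → κ)) : Prop :=
  IsProbabilityMeasure ν ∧
    ∀ (F : Finset Γ) (B : Γ → Set κ), (∀ γ, MeasurableSet (B γ)) →
      ν {ω | ∀ γ ∈ F, ω γ ∈ B γ} = ∏ γ ∈ F, κm (B γ)

/-- The action `f` is ergodic: every invariant Borel set is null or conull. -/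
def IsErgodicAction {Γ X : Type*} [MeasurableSpace X]
    (f : Γ → X → X) (μ : Measure X) : Prop :=
  ∀ A : Set X, MeasurableSet A → (∀ γ : Γ, f γ ⁻¹' A = A) → μ A = 0 ∨ μ A = 1

/-- A sequence of Borel sets `A n` is almost invariant:
`μ (f_γ A_n ∆ A_n) → 0` for every `γ`. -/
def AlmostInvariantSeq {Γ X : Type*} [MeasurableSpace X]
    (f : Γ → X → X) (μ : Measure X) (A : ℕ → Set X) : Prop :=
  ∀ γ : Γ, Tendsto (fun n => μ (symmDiff (f γ '' A n) (A n))) atTop (nhds 0)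

/-- A sequence of sets `A n` is trivial: `μ(A_n)(1 - μ(A_n)) → 0`. -/
def TrivialSeq {X : Type*} [MeasurableSpace X] (μ : Measure X) (A : ℕ → Set X) : Prop :=
  Tendsto (fun n => μ (A n) * (1 - μ (A n))) atTop (nhds 0)

/-- The action `f` is strongly ergodic: it is ergodic and every almost invariant sequence of
Borel sets is trivial. -/
def IsStronglyErgodic {Γ X : Type*} [MeasurableSpace X]
    (f : Γ → X → X) (μ : Measure X) : Prop :=
  IsErgodicAction f μ ∧
    ∀ A : ℕ → Set X, (∀ n, MeasurableSet (A n)) →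
      AlmostInvariantSeq f μ A → TrivialSeq μ A


namespace JS
variable {Γ : Type*} [Group Γ] {X : Type*} [MeasurableSpace X]
  {μ : Measure X} {f : Γ → X → X}

theorem leftInv (hf : IsPMPAction f μ) (γ : Γ) (x : X) : f γ⁻¹ (f γ x) = x := by
  rw [← hf.2.2, inv_mul_cancel, hf.2.1]

theorem rightInv (hf : IsPMPAction f μ) (γ : Γ) (x : X) : f γ (f γ⁻¹ x) = x := by
  rw [← hf.2.2, mul_inv_cancel, hf.2.1]

theorem image_eq_preimage (hf : IsPMPAction f μ) (γ : Γ) (B : Set X) :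
    f γ '' B = f γ⁻¹ ⁻¹' B := by
  ext y
  constructor
  · rintro ⟨x, hx, rfl⟩; simpa [Set.mem_preimage, leftInv hf] using hx
  · intro hy; exact ⟨f γ⁻¹ y, hy, rightInv hf γ y⟩

theorem injective (hf : IsPMPAction f μ) (γ : Γ) : Function.Injective (f γ) :=
  Function.LeftInverse.injective (leftInv hf γ)

theorem measurableSet_image (hf : IsPMPAction f μ) (γ : Γ) {B : Set X}
    (hB : MeasurableSet B) : MeasurableSet (f γ '' B) := by
  rw [image_eq_preimage hf]
  exact (hf.1 γ⁻¹).measurable hB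

theorem measure_image (hf : IsPMPAction f μ) (γ : Γ) {B : Set X} (hB : MeasurableSet B) :
    μ (f γ '' B) = μ B := by
  rw [image_eq_preimage hf]
  exact (hf.1 γ⁻¹).measure_preimage hB.nullMeasurableSet

/-- `f γ` as a measurable equivalence. -/
noncomputable def mequiv (hf : IsPMPAction f μ) (γ : Γ) : X ≃ᵐ X where
  toFun := f γ
  invFun := f γ⁻¹
  left_inv := leftInv hf γ
  right_inv := rightInv hf γ
  measurable_toFun := (hf.1 γ).measurable
  measurable_invFun := (hf.1 γ⁻¹).measurable

theorem abs_toReal_sub_le [IsFiniteMeasure μ] (U V : Set X) :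
    |(μ U).toReal - (μ V).toReal| ≤ (μ (symmDiff U V)).toReal := by
  have h1 : μ U ≤ μ V + μ (symmDiff U V) := by
    refine le_trans (measure_mono (show U ⊆ V ∪ symmDiff U V from ?_)) (measure_union_le _ _)
    intro x hx
    by_cases h : x ∈ V
    · exact Or.inl h
    · exact Or.inr (by simp [Set.mem_symmDiff, hx, h])
  have h2 : μ V ≤ μ U + μ (symmDiff U V) := by
    refine le_trans (measure_mono (show V ⊆ U ∪ symmDiff U V from ?_)) (measure_union_le _ _)
    intro x hx
    by_cases h : x ∈ U
    · exact Or.inl h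
    · exact Or.inr (by simp [Set.mem_symmDiff, hx, h])
  rw [abs_sub_le_iff]
  constructor
  · have := ENNReal.toReal_mono (by finiteness) h1
    rw [ENNReal.toReal_add (by finiteness) (by finiteness)] at this
    linarith
  · have := ENNReal.toReal_mono (by finiteness) h2
    rw [ENNReal.toReal_add (by finiteness) (by finiteness)] at this
    linarith


theorem surjective (hf : IsPMPAction f μ) (γ : Γ) : Function.Surjective (f γ) :=
  fun y => ⟨f γ⁻¹ y, rightInv hf γ y⟩

theorem dichotomy_of_ae_invariant [Countable Γ] (hf : IsPMPAction f μ)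
    (herg : IsErgodicAction f μ) {B : Set X} (hB : MeasurableSet B)
    (hinv : ∀ γ : Γ, μ (symmDiff (f γ ⁻¹' B) B) = 0) : μ B = 0 ∨ μ B = 1 := by
  set N₀ : Set X := ⋃ γ : Γ, symmDiff (f γ ⁻¹' B) B with hN₀
  have hN₀m : MeasurableSet N₀ :=
    MeasurableSet.iUnion fun γ => ((hf.1 γ).measurable hB).symmDiff hB
  have hN₀null : μ N₀ = 0 := measure_iUnion_null fun γ => hinv γ
  set N : Set X := ⋃ δ : Γ, f δ ⁻¹' N₀ with hN
  have hNm : MeasurableSet N := MeasurableSet.iUnion fun δ => (hf.1 δ).measurable hN₀m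
  have hNnull : μ N = 0 := measure_iUnion_null fun δ => by
    rw [(hf.1 δ).measure_preimage hN₀m.nullMeasurableSet]; exact hN₀null
  have hN₀N : N₀ ⊆ N := by
    intro x hx
    refine Set.mem_iUnion.2 ⟨1, ?_⟩
    simpa [hf.2.1] using hx
  have hNinv : ∀ γ : Γ, f γ ⁻¹' N = N := by
    intro γ
    ext x
    simp only [hN, Set.preimage_iUnion, Set.mem_iUnion, Set.mem_preimage]
    constructor
    · rintro ⟨δ, hδ⟩
      exact ⟨δ * γ, by rwa [hf.2.2]⟩
    · rintro ⟨δ, hδ⟩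
      refine ⟨δ * γ⁻¹, ?_⟩
      rw [← hf.2.2, mul_assoc, inv_mul_cancel, mul_one]
      exact hδ
  have hBNinv : ∀ γ : Γ, f γ ⁻¹' (B ∪ N) = B ∪ N := by
    intro γ
    ext x
    simp only [Set.preimage_union, Set.mem_union, Set.mem_preimage]
    have hxN : f γ x ∈ N ↔ x ∈ N := by
      conv_rhs => rw [← hNinv γ]
      rfl
    rw [hxN]
    constructor
    · rintro (hx | hx)
      · by_cases hxB : x ∈ B
        · exact Or.inl hxB
        · refine Or.inr (hN₀N (Set.mem_iUnion.2 ⟨γ, ?_⟩))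
          simp [Set.mem_symmDiff, hx, hxB]
      · exact Or.inr hx
    · rintro (hx | hx)
      · by_cases hxB : f γ x ∈ B
        · exact Or.inl hxB
        · refine Or.inr (hN₀N (Set.mem_iUnion.2 ⟨γ, ?_⟩))
          simp [Set.mem_symmDiff, hx, hxB]
      · exact Or.inr hx
  have hμeq : μ (B ∪ N) = μ B := by
    refine le_antisymm ?_ (measure_mono Set.subset_union_left)
    calc μ (B ∪ N) ≤ μ B + μ N := measure_union_le _ _
    _ = μ B := by rw [hNnull, add_zero]
  rcases herg (B ∪ N) (hB.union hNm) hBNinv with h | h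
  · exact Or.inl (by rw [← hμeq]; exact h)
  · exact Or.inr (by rw [← hμeq]; exact h)


/-- The key approximation property extracted from a nontrivial almost invariant sequence. -/
def ApproxProp {Γ X : Type*} [Group Γ] [MeasurableSpace X] (μ : Measure X)
    (f : Γ → X → X) (c : ℝ) : Prop :=
  ∀ Q : Finset (Set X), (∀ q ∈ Q, MeasurableSet q) → ∀ S : Finset Γ, ∀ η : ℝ, 0 < η →
    ∃ A : Set X, MeasurableSet A ∧
      (∀ q ∈ Q, |(μ (A ∩ q)).toReal - c * (μ q).toReal| ≤ η) ∧
      (∀ γ ∈ S, (μ (symmDiff (f γ '' A) A)).toReal ≤ η)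

theorem exists_approx [Countable Γ] [IsProbabilityMeasure μ] (hf : IsPMPAction f μ)
    (herg : IsErgodicAction f μ) (A : ℕ → Set X) (hAm : ∀ n, MeasurableSet (A n))
    (hai : AlmostInvariantSeq f μ A) (hnt : ¬ TrivialSeq μ A) :
    ∃ c : ℝ, 0 < c ∧ c < 1 ∧ ApproxProp μ f c := by
  classical
  -- Step 0: extract δ and the frequently-set
  obtain ⟨δ, hδpos, hfreq⟩ :
      ∃ δ : ENNReal, 0 < δ ∧ ∃ᶠ n in atTop, δ ≤ μ (A n) * (1 - μ (A n)) := by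
    by_contra hcon
    push_neg at hcon
    refine hnt (ENNReal.tendsto_nhds_zero.2 fun ε hε => ?_)
    have := hcon ε hε
    filter_upwards [this] with n hn
    exact hn.le
  set Tδ : Set ℕ := {n | δ ≤ μ (A n) * (1 - μ (A n))} with hTδ
  have hUne : (atTop ⊓ Filter.principal Tδ).NeBot := frequently_iff_neBot.mp hfreq
  set U : Ultrafilter ℕ := Ultrafilter.of (atTop ⊓ Filter.principal Tδ) with hUdef
  have hUle : (U : Filter ℕ) ≤ atTop ⊓ Filter.principal Tδ := Ultrafilter.of_le _
  have hUatTop : (U : Filter ℕ) ≤ atTop := hUle.trans inf_le_left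
  have hUT : Tδ ∈ U := le_principal_iff.mp (hUle.trans inf_le_right)
  -- δ is at most 1, define real bound
  have hμA1 : ∀ n, μ (A n) ≤ 1 := fun n => prob_le_one
  have hδ1 : δ ≤ 1 := by
    obtain ⟨n, hn⟩ := hfreq.exists
    calc δ ≤ μ (A n) * (1 - μ (A n)) := hn
    _ ≤ 1 * 1 := mul_le_mul' (hμA1 n) tsub_le_self
    _ = 1 := by ring
  set δr : ℝ := δ.toReal with hδr
  have hδrpos : 0 < δr := ENNReal.toReal_pos hδpos.ne' (hδ1.trans_lt (by norm_num)).ne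
  have hbound : ∀ n ∈ Tδ, δr ≤ (μ (A n)).toReal ∧ (μ (A n)).toReal ≤ 1 - δr := by
    intro n hn
    have hn' : δ ≤ μ (A n) * (1 - μ (A n)) := hn
    have hfin : μ (A n) ≠ ⊤ := measure_ne_top μ _
    have h1 : δ ≤ μ (A n) := le_trans hn' (mul_le_of_le_one_right (zero_le) tsub_le_self)
    have h2 : δ ≤ 1 - μ (A n) := le_trans hn' (mul_le_of_le_one_left (zero_le) (hμA1 n))
    constructor
    · exact ENNReal.toReal_mono hfin h1
    · have := ENNReal.toReal_mono (by finiteness) h2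
      rw [ENNReal.toReal_sub_of_le (hμA1 n) ENNReal.one_ne_top] at this
      simp only [ENNReal.toReal_one] at this
      linarith
  -- Step 1: ultrafilter limits
  have key : ∀ D : Set X, ∃ x, x ∈ Set.Icc (0:ℝ) 1 ∧
      Tendsto (fun n => (μ (A n ∩ D)).toReal) (U : Filter ℕ) (nhds x) := by
    intro D
    set g : ℕ → ℝ := fun n => (μ (A n ∩ D)).toReal with hg
    have hgI : ∀ n, g n ∈ Set.Icc (0:ℝ) 1 := fun n =>
      ⟨ENNReal.toReal_nonneg, by
        simpa using ENNReal.toReal_mono ENNReal.one_ne_top (prob_le_one (μ := μ))⟩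
    have hmem : (↑(U.map g) : Filter ℝ) ≤ Filter.principal (Set.Icc (0:ℝ) 1) := by
      rw [le_principal_iff]
      show Set.Icc (0:ℝ) 1 ∈ (U.map g : Filter ℝ)
      rw [Ultrafilter.coe_map, Filter.mem_map]
      exact Filter.univ_mem' hgI
    obtain ⟨x, hxI, hxle⟩ := isCompact_Icc.ultrafilter_le_nhds (U.map g) hmem
    refine ⟨x, hxI, ?_⟩
    show Filter.map g (U : Filter ℕ) ≤ nhds x
    rw [← Ultrafilter.coe_map]
    exact hxle
  choose lam hlamIcc hlam using key
  have huniq : ∀ (D : Set X) (x : ℝ),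
      Tendsto (fun n => (μ (A n ∩ D)).toReal) (U : Filter ℕ) (nhds x) → lam D = x :=
    fun D x hx => tendsto_nhds_unique (hlam D) hx
  have hlam_nonneg : ∀ D, 0 ≤ lam D := fun D => (hlamIcc D).1
  have hlam_le : ∀ D : Set X, lam D ≤ (μ D).toReal := fun D =>
    le_of_tendsto (hlam D) (Filter.Eventually.of_forall fun n =>
      ENNReal.toReal_mono (measure_ne_top μ D) (measure_mono Set.inter_subset_right))
  have hlam_add : ∀ D E : Set X, MeasurableSet E → Disjoint D E →
      lam (D ∪ E) = lam D + lam E := by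
    intro D E hE hDE
    refine huniq _ _ (((hlam D).add (hlam E)).congr fun n => ?_)
    rw [Set.inter_union_distrib_left,
      measure_union (hDE.mono Set.inter_subset_right Set.inter_subset_right) ((hAm n).inter hE),
      ENNReal.toReal_add (measure_ne_top _ _) (measure_ne_top _ _)]
  have hsd_toReal : ∀ γ : Γ, Tendsto (fun n => (μ (symmDiff (f γ '' A n) (A n))).toReal)
      atTop (nhds 0) := by
    intro γ
    simpa [Function.comp_def] using (ENNReal.tendsto_toReal (a := 0) (by norm_num)).comp (hai γ)
  have hlam_inv : ∀ (γ : Γ) (D : Set X), MeasurableSet D → lam (f γ ⁻¹' D) = lam D := by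
    intro γ D hD
    refine huniq _ _ ?_
    have heq : ∀ n, (μ (A n ∩ f γ ⁻¹' D)).toReal = (μ (f γ '' A n ∩ D)).toReal := by
      intro n
      congr 1
      have hset : A n ∩ f γ ⁻¹' D = f γ ⁻¹' (f γ '' A n ∩ D) := by
        rw [Set.preimage_inter, Set.preimage_image_eq _ (injective hf γ)]
      rw [hset, (hf.1 γ).measure_preimage
        ((measurableSet_image hf γ (hAm n)).inter hD).nullMeasurableSet]
    have hdiff : Tendsto
        (fun n => (μ (f γ '' A n ∩ D)).toReal - (μ (A n ∩ D)).toReal)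
        (U : Filter ℕ) (nhds 0) := by
      refine squeeze_zero_norm (fun n => ?_) ((hsd_toReal γ).mono_left hUatTop)
      calc |(μ (f γ '' A n ∩ D)).toReal - (μ (A n ∩ D)).toReal|
          ≤ (μ (symmDiff (f γ '' A n ∩ D) (A n ∩ D))).toReal := abs_toReal_sub_le _ _
        _ ≤ (μ (symmDiff (f γ '' A n) (A n))).toReal := by
            refine ENNReal.toReal_mono (measure_ne_top _ _) (measure_mono ?_)
            intro x hx
            simp only [Set.mem_symmDiff, Set.mem_inter_iff] at hx ⊢
            tauto
    have h2 : Tendsto (fun n => (μ (f γ '' A n ∩ D)).toReal)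
        (U : Filter ℕ) (nhds (lam D)) := by
      have h3 := (hlam D).add hdiff
      rw [add_zero] at h3
      exact h3.congr fun n => by ring
    exact h2.congr fun n => (heq n).symm
  have hm0 : lam ∅ = 0 := by
    refine huniq _ _ ?_
    have : ∀ n : ℕ, (μ (A n ∩ ∅)).toReal = 0 := fun n => by simp
    simpa [this] using (tendsto_const_nhds : Tendsto (fun _ : ℕ => (0:ℝ)) _ (nhds 0))
  -- countable additivity
  have hm_ctble : ∀ (D : ℕ → Set X), (∀ i, MeasurableSet (D i)) → Pairwise (Function.onFun Disjoint D) →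
      HasSum (fun i => lam (D i)) (lam (⋃ i, D i)) := by
    intro D hDm hdisj
    have hfin : ∀ k : ℕ, lam (⋃ i ∈ Finset.range k, D i) = ∑ i ∈ Finset.range k, lam (D i) := by
      intro k
      induction k with
      | zero => simpa using hm0
      | succ k ih =>
        have hset : (⋃ i ∈ Finset.range (k+1), D i) = (⋃ i ∈ Finset.range k, D i) ∪ D k := by
          ext x
          simp only [Set.mem_iUnion, Set.mem_union, Finset.mem_range, Nat.lt_succ_iff_lt_or_eq]
          constructor
          · rintro ⟨i, hi | rfl, hx⟩
            · exact Or.inl ⟨i, hi, hx⟩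
            · exact Or.inr hx
          · rintro (⟨i, hi, hx⟩ | hx)
            · exact ⟨i, Or.inl hi, hx⟩
            · exact ⟨k, Or.inr rfl, hx⟩
        have hdk : Disjoint (⋃ i ∈ Finset.range k, D i) (D k) := by
          rw [Set.disjoint_left]
          intro x hx hxk
          obtain ⟨i, hi, hxi⟩ := by simpa using hx
          exact Set.disjoint_left.mp (hdisj (Nat.ne_of_lt hi)) hxi hxk
        rw [Finset.sum_range_succ, ← ih, hset, hlam_add _ _ (hDm k) hdk]
    have htsum_eq : ∀ k : ℕ, ∑' i, μ (D (i + k)) = μ (⋃ i, D (i + k)) := by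
      intro k
      rw [measure_iUnion ?_ (fun i => hDm _)]
      intro i j hij
      exact hdisj (by omega)
    have httop : ∑' i, μ (D i) ≠ ⊤ := by
      rw [show (fun i => μ (D i)) = fun i => μ (D (i + 0)) by simp, htsum_eq 0]
      exact measure_ne_top μ _
    have htail0 : Tendsto (fun k => (∑' i, μ (D (i + k))).toReal) atTop (nhds 0) := by
      simpa [Function.comp_def] using (ENNReal.tendsto_toReal (a := 0) (by norm_num)).comp
        (ENNReal.tendsto_sum_nat_add (fun i => μ (D i)) httop)
    have htail : Tendsto (fun k => lam (⋃ i, D (i + k))) atTop (nhds 0) := by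
      refine squeeze_zero (fun k => hlam_nonneg _) (fun k => ?_) htail0
      calc lam (⋃ i, D (i + k)) ≤ (μ (⋃ i, D (i + k))).toReal := hlam_le _
        _ ≤ (∑' i, μ (D (i + k))).toReal := by rw [htsum_eq k]
    have hdec : ∀ k, lam (⋃ i, D i) = ∑ i ∈ Finset.range k, lam (D i) + lam (⋃ i, D (i + k)) := by
      intro k
      have hsplit : (⋃ i, D i) = (⋃ i ∈ Finset.range k, D i) ∪ ⋃ i, D (i + k) := by
        ext x
        simp only [Set.mem_iUnion, Set.mem_union, Finset.mem_range]
        constructor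
        · rintro ⟨i, hx⟩
          rcases lt_or_ge i k with hik | hik
          · exact Or.inl ⟨i, hik, hx⟩
          · exact Or.inr ⟨i - k, by rwa [Nat.sub_add_cancel hik]⟩
        · rintro (⟨i, _, hx⟩ | ⟨i, hx⟩)
          · exact ⟨i, hx⟩
          · exact ⟨i + k, hx⟩
      have hd2 : Disjoint (⋃ i ∈ Finset.range k, D i) (⋃ i, D (i + k)) := by
        rw [Set.disjoint_left]
        intro x hx hx2
        obtain ⟨i, hi, hxi⟩ := by simpa using hx
        obtain ⟨j, hxj⟩ := by simpa using hx2
        exact Set.disjoint_left.mp (hdisj (show i ≠ j + k by omega)) hxi hxj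
      rw [hsplit, hlam_add _ _ (MeasurableSet.iUnion fun i => hDm _) hd2, hfin k]
    have hps : Tendsto (fun k => ∑ i ∈ Finset.range k, lam (D i)) atTop
        (nhds (lam (⋃ i, D i))) := by
      have h4 : Tendsto (fun k => lam (⋃ i, D i) - lam (⋃ i, D (i + k))) atTop
          (nhds (lam (⋃ i, D i) - 0)) := tendsto_const_nhds.sub htail
      rw [sub_zero] at h4
      exact h4.congr fun k => by rw [hdec k]; ring
    exact (hasSum_iff_tendsto_nat_of_nonneg (fun i => hlam_nonneg _) _).2 hps
  -- the limit measure
  set lamM : Measure X := Measure.ofMeasurable (fun s _ => ENNReal.ofReal (lam s))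
    (by simp [hm0])
    (by
      intro D hDm hdisj
      have h := hm_ctble D hDm hdisj
      show ENNReal.ofReal (lam (⋃ i, D i)) = ∑' i, ENNReal.ofReal (lam (D i))
      rw [← h.tsum_eq, ← ENNReal.ofReal_tsum_of_nonneg (fun i => hlam_nonneg _) h.summable])
    with hlamM
  have hlamMapp : ∀ s : Set X, MeasurableSet s → lamM s = ENNReal.ofReal (lam s) :=
    fun s hs => Measure.ofMeasurable_apply s hs
  have hlamle : lamM ≤ μ := by
    refine Measure.le_iff.2 fun s hs => ?_
    rw [hlamMapp s hs]
    exact ENNReal.ofReal_le_of_le_toReal (hlam_le s)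
  have hac : lamM ≪ μ := hlamle.absolutelyContinuous
  haveI : IsFiniteMeasure lamM :=
    ⟨by rw [hlamMapp _ MeasurableSet.univ]; exact ENNReal.ofReal_lt_top⟩
  set h := lamM.rnDeriv μ with hh
  have hhm : Measurable h := Measure.measurable_rnDeriv _ _
  have hwd : μ.withDensity h = lamM := Measure.withDensity_rnDeriv_eq lamM μ hac
  have hint : ∀ s, MeasurableSet s → ∫⁻ x in s, h x ∂μ = lamM s := fun s hs => by
    rw [← hwd, withDensity_apply _ hs]
  -- Step 4 : h is a.e. invariant
  have haeγ : ∀ γ : Γ, (fun x => h (f γ x)) =ᵐ[μ] h := by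
    intro γ
    have hcomp : Measurable fun x => h (f γ x) := hhm.comp (hf.1 γ).measurable
    refine ae_eq_of_forall_setLIntegral_eq_of_sigmaFinite hcomp hhm fun s hs _ => ?_
    have h1 : ∫⁻ x in s, h (f γ x) ∂μ = ∫⁻ y in f γ '' s, h y ∂μ :=
      (hf.1 γ).setLIntegral_comp_emb (mequiv hf γ).measurableEmbedding h s
    rw [h1, hint _ (measurableSet_image hf γ hs), hint _ hs,
      hlamMapp _ (measurableSet_image hf γ hs), hlamMapp _ hs, image_eq_preimage hf,
      hlam_inv γ⁻¹ s hs]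
  -- Step 5 : dichotomy for level sets
  have hdich : ∀ t : ENNReal, μ {x | t < h x} = 0 ∨ μ {x | t < h x} = 1 := by
    intro t
    have hLm : MeasurableSet {x | t < h x} := measurableSet_lt measurable_const hhm
    refine dichotomy_of_ae_invariant hf herg hLm fun γ => ?_
    have hsub : symmDiff (f γ ⁻¹' {x | t < h x}) {x | t < h x} ⊆ {x | ¬ h (f γ x) = h x} := by
      intro x hx
      simp only [Set.mem_symmDiff, Set.mem_preimage, Set.mem_setOf_eq] at hx ⊢
      intro heq
      rw [heq] at hx
      tauto
    refine measure_mono_null hsub ?_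
    have h5 := haeγ γ
    rwa [Filter.EventuallyEq, ae_iff] at h5
  have h2T : μ {x | (2:ENNReal) < h x} = 0 := by
    rcases hdich 2 with h0 | h1
    · exact h0
    · exfalso
      have hmark : (2:ENNReal) * μ {x | (2:ENNReal) ≤ h x} ≤ ∫⁻ x, h x ∂μ :=
        mul_meas_ge_le_lintegral₀ hhm.aemeasurable 2
      have hiq : ∫⁻ x, h x ∂μ = lamM Set.univ := by
        rw [← hint _ MeasurableSet.univ, Measure.restrict_univ]
      have hge : μ {x | (2:ENNReal) ≤ h x} = 1 := by
        refine le_antisymm prob_le_one ?_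
        rw [← h1]
        exact measure_mono fun x hx => le_of_lt (show (2:ENNReal) < h x from hx)
      rw [hiq, hge, mul_one] at hmark
      have hle1 : lamM Set.univ ≤ 1 := le_trans (hlamle Set.univ) prob_le_one
      exact absurd (hmark.trans hle1) (by norm_num)
  -- Step 6 : h is a.e. constant
  set T : Set ENNReal := {t | μ {x | t < h x} = 0} with hT
  have hTne : T.Nonempty := ⟨2, h2T⟩
  set c : ENNReal := sInf T with hc
  have hcle2 : c ≤ 2 := sInf_le h2T
  have hcne : c ≠ ⊤ := (hcle2.trans_lt (by norm_num)).ne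
  have hchi : μ {x | c < h x} = 0 := by
    obtain ⟨u, hanti, hutend, huT⟩ := exists_seq_tendsto_sInf hTne (OrderBot.bddBelow T)
    refine measure_mono_null (?_ : _ ⊆ ⋃ n, {x | u n < h x}) (measure_iUnion_null fun n => huT n)
    intro x hx
    have hev : ∀ᶠ n in atTop, u n < h x := hutend.eventually_lt_const hx
    obtain ⟨n, hn⟩ := hev.exists
    exact Set.mem_iUnion.2 ⟨n, hn⟩
  have hclo : μ {x | h x < c} = 0 := by
    rcases eq_or_ne c 0 with hc0 | hc0
    · have : {x | h x < c} = ∅ := by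
        ext x; simp [hc0]
      rw [this, measure_empty]
    · obtain ⟨u, hmono, hmem, hutend⟩ :=
        exists_seq_strictMono_tendsto' (show (0:ENNReal) < c from pos_iff_ne_zero.2 hc0)
      refine measure_mono_null (?_ : _ ⊆ ⋃ n, {x | h x ≤ u n}) (measure_iUnion_null fun n => ?_)
      · intro x hx
        have hev : ∀ᶠ n in atTop, h x < u n := hutend.eventually_const_lt hx
        obtain ⟨n, hn⟩ := hev.exists
        exact Set.mem_iUnion.2 ⟨n, le_of_lt hn⟩
      · have hnotT : u n ∉ T := fun hmemT => absurd (sInf_le hmemT) (not_le.2 (hmem n).2)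
        have h1 : μ {x | u n < h x} = 1 := (hdich (u n)).resolve_left hnotT
        have hcomplset : {x | h x ≤ u n} = {x | u n < h x}ᶜ := by
          ext x; simp [not_lt]
        rw [hcomplset, measure_compl (measurableSet_lt measurable_const hhm) (measure_ne_top _ _),
          h1, measure_univ, tsub_self]
  have hconst : h =ᵐ[μ] fun _ => c := by
    rw [Filter.EventuallyEq, ae_iff]
    refine measure_mono_null (?_ : _ ⊆ {x | h x < c} ∪ {x | c < h x}) ?_
    · intro x hx
      exact (lt_or_gt_of_ne hx).imp id id
    · exact measure_union_null hclo hchi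
  -- Step 7 : identify lam
  set cr : ℝ := c.toReal with hcr
  have hlam_eq : ∀ D : Set X, MeasurableSet D → lam D = cr * (μ D).toReal := by
    intro D hD
    have h1 : lamM D = c * μ D := by
      rw [← hint _ hD, lintegral_congr_ae (ae_restrict_of_ae hconst), setLIntegral_const]
    have h2 : ENNReal.ofReal (lam D) = c * μ D := by rw [← hlamMapp D hD, h1]
    calc lam D = (ENNReal.ofReal (lam D)).toReal :=
          (ENNReal.toReal_ofReal (hlam_nonneg D)).symm
      _ = (c * μ D).toReal := by rw [h2]
      _ = cr * (μ D).toReal := ENNReal.toReal_mul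
  -- Step 8 : bounds for cr
  have hcr_univ : lam Set.univ = cr := by
    rw [hlam_eq _ MeasurableSet.univ]; simp
  have hcrIcc : cr ∈ Set.Icc δr (1 - δr) := by
    have htend : Tendsto (fun n => (μ (A n)).toReal) (U : Filter ℕ) (nhds (lam Set.univ)) :=
      (hlam Set.univ).congr fun n => by rw [Set.inter_univ]
    have hev : ∀ᶠ n in (U : Filter ℕ), (μ (A n)).toReal ∈ Set.Icc δr (1 - δr) :=
      Filter.mem_of_superset hUT fun n hn => ⟨(hbound n hn).1, (hbound n hn).2⟩
    have := isClosed_Icc.mem_of_tendsto htend hev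
    rwa [hcr_univ] at this
  have hcrpos : 0 < cr := lt_of_lt_of_le hδrpos hcrIcc.1
  have hcrlt1 : cr < 1 := lt_of_le_of_lt hcrIcc.2 (by linarith)
  -- Step 9 : conclude
  refine ⟨cr, hcrpos, hcrlt1, ?_⟩
  intro Q hQm S η hη
  have hQmem : ∀ q ∈ Q, {n | |(μ (A n ∩ q)).toReal - cr * (μ q).toReal| ≤ η} ∈ U := by
    intro q hq
    have h1 := hlam q
    rw [hlam_eq q (hQm q hq)] at h1
    have h2 := Metric.tendsto_nhds.mp h1 η hη
    rw [Filter.eventually_iff] at h2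
    refine Filter.mem_of_superset h2 fun n hn => ?_
    simp only [Set.mem_setOf_eq, Real.dist_eq] at hn ⊢
    exact le_of_lt hn
  have hSmem : ∀ γ ∈ S, {n | (μ (symmDiff (f γ '' A n) (A n))).toReal ≤ η} ∈ U := by
    intro γ hγ
    have h2 := Metric.tendsto_nhds.mp ((hsd_toReal γ).mono_left hUatTop) η hη
    rw [Filter.eventually_iff] at h2
    refine Filter.mem_of_superset h2 fun n hn => ?_
    simp only [Set.mem_setOf_eq, Real.dist_eq, sub_zero] at hn ⊢
    exact le_of_lt (lt_of_abs_lt hn)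
  have hbig : ((⋂ q ∈ Q, {n | |(μ (A n ∩ q)).toReal - cr * (μ q).toReal| ≤ η}) ∩
      ⋂ γ ∈ S, {n | (μ (symmDiff (f γ '' A n) (A n))).toReal ≤ η}) ∈ U := by
    refine Filter.inter_mem ?_ ?_
    · exact (Filter.biInter_finset_mem Q).2 hQmem
    · exact (Filter.biInter_finset_mem S).2 hSmem
  obtain ⟨n, hn1, hn2⟩ := Filter.nonempty_of_mem hbig
  refine ⟨A n, hAm n, fun q hq => ?_, fun γ hγ => ?_⟩
  · have := Set.mem_iInter₂.1 hn1 q hq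
    exact this
  · have := Set.mem_iInter₂.1 hn2 γ hγ
    exact this


/-- real-valued triangle inequality for union measure -/
theorem toReal_union_le [IsFiniteMeasure μ] (s t : Set X) :
    (μ (s ∪ t)).toReal ≤ (μ s).toReal + (μ t).toReal := by
  rw [← ENNReal.toReal_add (measure_ne_top _ _) (measure_ne_top _ _)]
  exact ENNReal.toReal_mono (by finiteness) (measure_union_le s t)

theorem toReal_mono' [IsFiniteMeasure μ] {s t : Set X} (h : s ⊆ t) :
    (μ s).toReal ≤ (μ t).toReal :=
  ENNReal.toReal_mono (measure_ne_top _ _) (measure_mono h)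

/-- measure of a list union, disjoint case -/
theorem toReal_list_union [IsFiniteMeasure μ] :
    ∀ (u : List (Set X)), (∀ s ∈ u, MeasurableSet s) → u.Pairwise Disjoint →
      (μ (⋃ s ∈ u, s)).toReal = (u.map fun s => (μ s).toReal).sum := by
  intro u
  induction u with
  | nil => intro _ _; simp
  | cons s u ih =>
    intro hm hp
    have hset : (⋃ t ∈ (s :: u), t) = s ∪ ⋃ t ∈ u, t := by
      ext x; simp [List.mem_cons, Set.mem_iUnion]
    have hdisj : Disjoint s (⋃ t ∈ u, t) := by
      rw [Set.disjoint_left]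
      intro x hx hx2
      simp only [Set.mem_iUnion] at hx2
      obtain ⟨t, ht, hxt⟩ := hx2
      exact Set.disjoint_left.mp ((List.pairwise_cons.1 hp).1 t ht) hx hxt
    have hmu : MeasurableSet (⋃ t ∈ u, t) :=
      MeasurableSet.biUnion (u.finite_toSet.countable) (fun t ht => hm t (List.mem_cons_of_mem _ ht))
    rw [hset, measure_union hdisj hmu,
      ENNReal.toReal_add (measure_ne_top _ _) (measure_ne_top _ _), List.map_cons, List.sum_cons,
      ih (fun t ht => hm t (List.mem_cons_of_mem _ ht)) (List.pairwise_cons.1 hp).2]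

/-- measure of a list union bounded by `len * e` -/
theorem toReal_list_union_le [IsFiniteMeasure μ] (e : ℝ) (he : 0 ≤ e) :
    ∀ (u : List (Set X)), (∀ s ∈ u, (μ s).toReal ≤ e) →
      (μ (⋃ s ∈ u, s)).toReal ≤ u.length * e := by
  intro u
  induction u with
  | nil => intro _; simp
  | cons s u ih =>
    intro hb
    have hset : (⋃ t ∈ (s :: u), t) = s ∪ ⋃ t ∈ u, t := by
      ext x; simp [List.mem_cons, Set.mem_iUnion]
    rw [hset]
    calc (μ (s ∪ ⋃ t ∈ u, t)).toReal ≤ (μ s).toReal + (μ (⋃ t ∈ u, t)).toReal :=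
          toReal_union_le _ _
      _ ≤ e + u.length * e := by
          have := ih (fun t ht => hb t (List.mem_cons_of_mem _ ht))
          have h1 := hb s (List.mem_cons_self)
          linarith
      _ = (s :: u).length * e := by simp [List.length_cons]; push_cast; ring

theorem list_abs_sum_le {α : Type*} (ff g : α → ℝ) (e : ℝ) :
    ∀ (u : List α), (∀ p ∈ u, |ff p - g p| ≤ e) →
      |(u.map ff).sum - (u.map g).sum| ≤ u.length * e := by
  intro u
  induction u with
  | nil => intro _; simp
  | cons p u ih =>
    intro hb
    have h1 := hb p (List.mem_cons_self)
    have h2 := ih (fun q hq => hb q (List.mem_cons_of_mem _ hq))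
    simp only [List.map_cons, List.sum_cons, List.length_cons]
    have : ff p + (u.map ff).sum - (g p + (u.map g).sum)
        = (ff p - g p) + ((u.map ff).sum - (u.map g).sum) := by ring
    rw [this]
    calc |(ff p - g p) + ((u.map ff).sum - (u.map g).sum)|
        ≤ |ff p - g p| + |(u.map ff).sum - (u.map g).sum| := abs_add_le _ _
      _ ≤ e + u.length * e := by linarith
      _ = ((p :: u).length) * e := by simp [List.length_cons]; push_cast; ring

/-- greedy selection of a sublist with prescribed weight sum -/
theorem greedy {α : Type*} (ff : α → ℝ) (M : ℝ) (hM : 0 < M) :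
    ∀ (l : List α), (∀ p ∈ l, 0 ≤ ff p ∧ ff p ≤ M) → ∀ t : ℝ, 0 ≤ t →
      t ≤ (l.map ff).sum → ∃ u : List α, u.Sublist l ∧
        t - M < (u.map ff).sum ∧ (u.map ff).sum ≤ t := by
  intro l
  induction l with
  | nil =>
    intro _ t ht0 hts
    simp only [List.map_nil, List.sum_nil] at hts
    exact ⟨[], List.Sublist.refl _, by simp; linarith, by simpa using ht0⟩
  | cons p l ih =>
    intro hw t ht0 hts
    simp only [List.map_cons, List.sum_cons] at hts
    by_cases hat : ff p ≤ t
    · obtain ⟨u, hus, h1, h2⟩ := ih (fun q hq => hw q (List.mem_cons_of_mem _ hq))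
        (t - ff p) (by linarith) (by linarith)
      refine ⟨p :: u, hus.cons₂ p, ?_, ?_⟩
      · simp only [List.map_cons, List.sum_cons]; linarith
      · simp only [List.map_cons, List.sum_cons]; linarith
    · refine ⟨[], List.nil_sublist _, ?_, by simpa using ht0⟩
      have := (hw p (List.mem_cons_self)).2
      simp only [List.map_nil, List.sum_nil]
      linarith


theorem symmDiff_image_inter_le [IsFiniteMeasure μ] (hf : IsPMPAction f μ) (γ : Γ)
    (P A : Set X) :
    (μ (symmDiff (f γ '' (P ∩ A)) (P ∩ A))).toReal
      ≤ (μ (symmDiff (f γ '' P) P)).toReal + (μ (symmDiff (f γ '' A) A)).toReal := by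
  rw [Set.image_inter (injective hf γ)]
  calc (μ (symmDiff (f γ '' P ∩ f γ '' A) (P ∩ A))).toReal
      ≤ (μ (symmDiff (f γ '' P) P ∪ symmDiff (f γ '' A) A)).toReal := by
        refine toReal_mono' ?_
        intro x hx
        simp only [Set.mem_symmDiff, Set.mem_inter_iff, Set.mem_union] at hx ⊢
        tauto
    _ ≤ _ := toReal_union_le _ _

theorem symmDiff_image_diff_le [IsFiniteMeasure μ] (hf : IsPMPAction f μ) (γ : Γ)
    (P A : Set X) :
    (μ (symmDiff (f γ '' (P \ A)) (P \ A))).toReal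
      ≤ (μ (symmDiff (f γ '' P) P)).toReal + (μ (symmDiff (f γ '' A) A)).toReal := by
  rw [Set.image_diff (injective hf γ)]
  calc (μ (symmDiff (f γ '' P \ f γ '' A) (P \ A))).toReal
      ≤ (μ (symmDiff (f γ '' P) P ∪ symmDiff (f γ '' A) A)).toReal := by
        refine toReal_mono' ?_
        intro x hx
        simp only [Set.mem_symmDiff, Set.mem_diff, Set.mem_union] at hx ⊢
        tauto
    _ ≤ _ := toReal_union_le _ _

theorem list_sum_map_mul {α : Type*} (a : ℝ) (g : α → ℝ) :
    ∀ l : List α, (l.map fun p => a * g p).sum = a * (l.map g).sum := by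
  intro l
  induction l with
  | nil => simp
  | cons p l ihl => simp only [List.map_cons, List.sum_cons, ihl]; ring

/-- The tower of nearly independent nearly invariant partitions. -/
theorem tower [IsProbabilityMeasure μ] (hf : IsPMPAction f μ) {c : ℝ}
    (hc0 : 0 < c) (hc1 : c < 1) (hap : ApproxProp μ f c) (k : ℕ) :
    ∀ (Q : Finset (Set X)), (∀ q ∈ Q, MeasurableSet q) → ∀ (S : Finset Γ) (η : ℝ), 0 < η →
    ∃ l : List (Set X × ℝ),
      l.length ≤ 2 ^ k ∧
      (∀ p ∈ l, MeasurableSet p.1) ∧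
      l.Pairwise (fun p q => Disjoint p.1 q.1) ∧
      (∀ p ∈ l, 0 ≤ p.2 ∧ p.2 ≤ (max c (1 - c)) ^ k) ∧
      (l.map Prod.snd).sum = 1 ∧
      (∀ q ∈ Q, ∀ p ∈ l, |(μ (q ∩ p.1)).toReal - p.2 * (μ q).toReal| ≤ η) ∧
      (∀ p ∈ l, ∀ γ ∈ S, (μ (symmDiff (f γ '' p.1) p.1)).toReal ≤ η) := by
  classical
  induction k with
  | zero =>
    intro Q hQ S η hη
    refine ⟨[(Set.univ, 1)], by simp, by simp, by simp, by simp, by simp, ?_, ?_⟩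
    · intro q hq p hp
      simp only [List.mem_singleton] at hp
      subst hp
      simp only [Set.inter_univ, one_mul, sub_self, abs_zero]
      exact hη.le
    · intro p hp γ hγ
      simp only [List.mem_singleton] at hp
      subst hp
      have : f γ '' Set.univ = Set.univ := by
        rw [Set.image_univ, Set.range_eq_univ]
        exact surjective hf γ
      simp only [this, symmDiff_self, Set.bot_eq_empty, measure_empty, ENNReal.toReal_zero]
      exact hη.le
  | succ k ih =>
    intro Q hQ S η hη
    obtain ⟨l, hlen, hm, hdisj, hwb, hsum, happx, hinv⟩ :=
      ih Q hQ S (η / 4) (by linarith)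
    set Q' : Finset (Set X) := Q.biUnion (fun q => l.toFinset.image (fun p => q ∩ p.1)) with hQ'
    have hQ'm : ∀ q ∈ Q', MeasurableSet q := by
      intro q hq
      simp only [hQ', Finset.mem_biUnion, Finset.mem_image, List.mem_toFinset] at hq
      obtain ⟨q₀, hq₀, p, hp, rfl⟩ := hq
      exact (hQ q₀ hq₀).inter (hm p hp)
    obtain ⟨A, hAmeas, hAappx, hAinv⟩ := hap Q' hQ'm S (η / 4) (by linarith)
    refine ⟨l.map (fun p => (p.1 ∩ A, c * p.2)) ++ l.map (fun p => (p.1 \ A, (1 - c) * p.2)),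
      ?_, ?_, ?_, ?_, ?_, ?_, ?_⟩
    · simp only [List.length_append, List.length_map, pow_succ]
      omega
    · intro p hp
      rcases List.mem_append.1 hp with hp | hp <;>
        · obtain ⟨p₀, hp₀, rfl⟩ := List.mem_map.1 hp
          first
            | exact (hm p₀ hp₀).inter hAmeas
            | exact (hm p₀ hp₀).diff hAmeas
    · rw [List.pairwise_append]
      refine ⟨?_, ?_, ?_⟩
      · rw [List.pairwise_map]
        exact hdisj.imp fun h => h.mono Set.inter_subset_left Set.inter_subset_left
      · rw [List.pairwise_map]
        exact hdisj.imp fun h => h.mono Set.diff_subset Set.diff_subset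
      · intro p hp q hq
        obtain ⟨p₀, hp₀, rfl⟩ := List.mem_map.1 hp
        obtain ⟨q₀, hq₀, rfl⟩ := List.mem_map.1 hq
        rw [Set.disjoint_left]
        rintro x ⟨-, hxA⟩ ⟨-, hxA'⟩
        exact hxA' hxA
    · intro p hp
      rcases List.mem_append.1 hp with hp | hp <;>
          obtain ⟨p₀, hp₀, rfl⟩ := List.mem_map.1 hp
      · obtain ⟨h0, h1⟩ := hwb p₀ hp₀
        dsimp only
        constructor
        · positivity
        · rw [pow_succ]
          calc c * p₀.2 ≤ max c (1 - c) * p₀.2 := by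
                have := le_max_left c (1 - c); nlinarith
            _ ≤ max c (1 - c) ^ k * max c (1 - c) := by
                have hr0 : (0:ℝ) ≤ max c (1 - c) := le_trans hc0.le (le_max_left _ _)
                nlinarith
      · obtain ⟨h0, h1⟩ := hwb p₀ hp₀
        dsimp only
        constructor
        · nlinarith
        · rw [pow_succ]
          calc (1 - c) * p₀.2 ≤ max c (1 - c) * p₀.2 := by
                have := le_max_right c (1 - c); nlinarith
            _ ≤ max c (1 - c) ^ k * max c (1 - c) := by
                have hr0 : (0:ℝ) ≤ max c (1 - c) := le_trans hc0.le (le_max_left _ _)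
                nlinarith
    · rw [List.map_append, List.sum_append, List.map_map, List.map_map]
      have e1 : (Prod.snd ∘ fun p : Set X × ℝ => (p.1 ∩ A, c * p.2)) = fun p => c * p.2 := rfl
      have e2 : (Prod.snd ∘ fun p : Set X × ℝ => (p.1 \ A, (1 - c) * p.2))
          = fun p => (1 - c) * p.2 := rfl
      rw [e1, e2]
      rw [list_sum_map_mul c Prod.snd l, list_sum_map_mul (1 - c) Prod.snd l, hsum]
      ring
    · intro q hq p hp
      have hqP : ∀ p₀ ∈ l, |(μ (A ∩ (q ∩ p₀.1))).toReal - c * (μ (q ∩ p₀.1)).toReal| ≤ η / 4 := by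
        intro p₀ hp₀
        refine hAappx _ ?_
        simp only [hQ', Finset.mem_biUnion, Finset.mem_image, List.mem_toFinset]
        exact ⟨q, hq, p₀, hp₀, rfl⟩
      rcases List.mem_append.1 hp with hp | hp <;>
          obtain ⟨p₀, hp₀, rfl⟩ := List.mem_map.1 hp <;> dsimp only
      · have h1 := hqP p₀ hp₀
        have h2 := happx q hq p₀ hp₀
        have hset : q ∩ (p₀.1 ∩ A) = A ∩ (q ∩ p₀.1) := by
          ext x; simp only [Set.mem_inter_iff]; tauto
        rw [hset]
        set a := (μ (q ∩ p₀.1)).toReal - p₀.2 * (μ q).toReal with ha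
        set b := (μ (A ∩ (q ∩ p₀.1))).toReal - c * (μ (q ∩ p₀.1)).toReal with hb
        have hgoal : (μ (A ∩ (q ∩ p₀.1))).toReal - c * p₀.2 * (μ q).toReal = b + c * a := by
          rw [ha, hb]; ring
        rw [hgoal]
        calc |b + c * a| ≤ |b| + |c * a| := abs_add_le _ _
          _ = |b| + c * |a| := by rw [abs_mul, abs_of_nonneg hc0.le]
          _ ≤ η / 4 + c * (η / 4) := by
              have := mul_le_mul_of_nonneg_left h2 hc0.le
              linarith [h1]
          _ ≤ η := by nlinarith
      · have h1 := hqP p₀ hp₀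
        have h2 := happx q hq p₀ hp₀
        have hset : q ∩ (p₀.1 \ A) = (q ∩ p₀.1) \ (A ∩ (q ∩ p₀.1)) := by
          ext x; simp only [Set.mem_inter_iff, Set.mem_diff]; tauto
        have hsub : A ∩ (q ∩ p₀.1) ⊆ q ∩ p₀.1 := Set.inter_subset_right
        have hmeas : MeasurableSet (A ∩ (q ∩ p₀.1)) :=
          hAmeas.inter ((hQ q hq).inter (hm p₀ hp₀))
        have hμdiff : (μ (q ∩ (p₀.1 \ A))).toReal
            = (μ (q ∩ p₀.1)).toReal - (μ (A ∩ (q ∩ p₀.1))).toReal := by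
          rw [hset, measure_diff hsub hmeas.nullMeasurableSet (measure_ne_top _ _),
            ENNReal.toReal_sub_of_le (measure_mono hsub) (measure_ne_top _ _)]
        rw [hμdiff]
        set a := (μ (q ∩ p₀.1)).toReal - p₀.2 * (μ q).toReal with ha
        set b := (μ (A ∩ (q ∩ p₀.1))).toReal - c * (μ (q ∩ p₀.1)).toReal with hb
        have hgoal : (μ (q ∩ p₀.1)).toReal - (μ (A ∩ (q ∩ p₀.1))).toReal
            - (1 - c) * p₀.2 * (μ q).toReal = (1 - c) * a - b := by
          rw [ha, hb]; ring
        rw [hgoal]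
        calc |(1 - c) * a - b| ≤ |(1 - c) * a| + |b| := abs_sub _ _
          _ = (1 - c) * |a| + |b| := by rw [abs_mul, abs_of_nonneg (by linarith : (0:ℝ) ≤ 1 - c)]
          _ ≤ (1 - c) * (η / 4) + η / 4 := by
              have := mul_le_mul_of_nonneg_left h2 (by linarith : (0:ℝ) ≤ 1 - c)
              linarith [h1]
          _ ≤ η := by nlinarith
    · intro p hp γ hγ
      rcases List.mem_append.1 hp with hp | hp <;>
          obtain ⟨p₀, hp₀, rfl⟩ := List.mem_map.1 hp <;> dsimp only
      · calc (μ (symmDiff (f γ '' (p₀.1 ∩ A)) (p₀.1 ∩ A))).toReal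
            ≤ (μ (symmDiff (f γ '' p₀.1) p₀.1)).toReal
              + (μ (symmDiff (f γ '' A) A)).toReal := symmDiff_image_inter_le hf γ _ _
          _ ≤ η := by
              have := hinv p₀ hp₀ γ hγ
              have := hAinv γ hγ
              linarith
      · calc (μ (symmDiff (f γ '' (p₀.1 \ A)) (p₀.1 \ A))).toReal
            ≤ (μ (symmDiff (f γ '' p₀.1) p₀.1)).toReal
              + (μ (symmDiff (f γ '' A) A)).toReal := symmDiff_image_diff_le hf γ _ _
          _ ≤ η := by
              have := hinv p₀ hp₀ γ hγ
              have := hAinv γ hγ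
              linarith


/-- Key lemma: sets that are nearly invariant and cut every set of a finite family in half. -/
theorem half [IsProbabilityMeasure μ] (hf : IsPMPAction f μ) {c : ℝ} (hc0 : 0 < c)
    (hc1 : c < 1) (hap : ApproxProp μ f c) (Q : Finset (Set X))
    (hQ : ∀ q ∈ Q, MeasurableSet q) (S : Finset Γ) (η : ℝ) (hη : 0 < η) :
    ∃ A : Set X, MeasurableSet A ∧
      (∀ q ∈ Q, |(μ (q ∩ A)).toReal - 2⁻¹ * (μ q).toReal| ≤ η) ∧
      (∀ γ ∈ S, (μ (symmDiff (f γ '' A) A)).toReal ≤ η) := by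
  classical
  set r := max c (1 - c) with hr
  have hr0 : 0 < r := lt_of_lt_of_le hc0 (le_max_left _ _)
  have hr1 : r < 1 := max_lt hc1 (by linarith)
  obtain ⟨k, hk⟩ := exists_pow_lt_of_lt_one (show (0:ℝ) < η/2 by linarith) hr1
  set η' := η / (2 * 2 ^ k) with hη'def
  have hη' : 0 < η' := by positivity
  obtain ⟨l, hlen, hm, hdisj, hwb, hsum, happx, hinv⟩ := tower hf hc0 hc1 hap k Q hQ S η' hη'
  obtain ⟨u, husub, hgt, hle⟩ := greedy Prod.snd (r ^ k) (pow_pos hr0 k) l hwb 2⁻¹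
    (by norm_num) (by rw [hsum]; norm_num)
  have humem : ∀ p ∈ u, p ∈ l := fun p hp => husub.subset hp
  have hupair : u.Pairwise (fun p q => Disjoint p.1 q.1) := hdisj.sublist husub
  have hulen : (u.length : ℝ) ≤ 2 ^ k := by
    have h1 : u.length ≤ l.length := husub.length_le
    have : (u.length : ℝ) ≤ (l.length : ℝ) := by exact_mod_cast h1
    refine this.trans ?_
    exact_mod_cast hlen
  set A : Set X := ⋃ p ∈ u, p.1 with hA
  have hAmeas : MeasurableSet A :=
    MeasurableSet.biUnion u.finite_toSet.countable (fun p hp => hm p (humem p hp))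
  refine ⟨A, hAmeas, ?_, ?_⟩
  · intro q hq
    have hsplit : q ∩ A = ⋃ s ∈ (u.map fun p => q ∩ p.1), s := by
      ext x
      simp only [hA, Set.mem_inter_iff, Set.mem_iUnion, List.mem_map]
      constructor
      · rintro ⟨hxq, p, hp, hxp⟩
        exact ⟨q ∩ p.1, ⟨p, hp, rfl⟩, hxq, hxp⟩
      · rintro ⟨s, ⟨p, hp, rfl⟩, hxq, hxp⟩
        exact ⟨hxq, p, hp, hxp⟩
    have hmeq : (μ (q ∩ A)).toReal
        = (u.map fun p => (μ (q ∩ p.1)).toReal).sum := by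
      rw [hsplit, toReal_list_union]
      · rw [List.map_map]; rfl
      · rintro s hs
        obtain ⟨p, hp, rfl⟩ := List.mem_map.1 hs
        exact (hQ q hq).inter (hm p (humem p hp))
      · rw [List.pairwise_map]
        exact hupair.imp fun h => h.mono Set.inter_subset_right Set.inter_subset_right
    have habs : |(u.map fun p => (μ (q ∩ p.1)).toReal).sum
        - (u.map fun p => p.2 * (μ q).toReal).sum| ≤ u.length * η' :=
      list_abs_sum_le _ _ _ u (fun p hp => happx q hq p (humem p hp))
    have hwsum : (u.map fun p => p.2 * (μ q).toReal).sum
        = (u.map Prod.snd).sum * (μ q).toReal := by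
      have : (fun p : Set X × ℝ => p.2 * (μ q).toReal)
          = fun p => (μ q).toReal * p.2 := by funext p; ring
      rw [this, list_sum_map_mul]
      ring
    have hq1 : (μ q).toReal ≤ 1 := by
      simpa using ENNReal.toReal_mono ENNReal.one_ne_top (prob_le_one (μ := μ))
    have hq0 : 0 ≤ (μ q).toReal := ENNReal.toReal_nonneg
    have hhalf : |(u.map Prod.snd).sum * (μ q).toReal - 2⁻¹ * (μ q).toReal| ≤ r ^ k := by
      rw [show (u.map Prod.snd).sum * (μ q).toReal - 2⁻¹ * (μ q).toReal
        = ((u.map Prod.snd).sum - 2⁻¹) * (μ q).toReal from by ring, abs_mul,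
        abs_of_nonneg hq0]
      have h1 : |(u.map Prod.snd).sum - 2⁻¹| ≤ r ^ k := by
        rw [abs_le]
        constructor <;> [linarith; linarith [pow_pos hr0 k]]
      nlinarith [abs_nonneg ((u.map Prod.snd).sum - 2⁻¹)]
    have hulenbd : u.length * η' ≤ η / 2 := by
      have : (u.length : ℝ) * η' ≤ 2 ^ k * η' :=
        mul_le_mul_of_nonneg_right hulen hη'.le
      rw [hη'def] at this ⊢
      calc (u.length:ℝ) * (η / (2 * 2 ^ k)) ≤ 2 ^ k * (η / (2 * 2 ^ k)) := this
        _ = η / 2 := by field_simp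
    rw [hmeq]
    calc |(u.map fun p => (μ (q ∩ p.1)).toReal).sum - 2⁻¹ * (μ q).toReal|
        ≤ |(u.map fun p => (μ (q ∩ p.1)).toReal).sum
            - (u.map fun p => p.2 * (μ q).toReal).sum|
          + |(u.map fun p => p.2 * (μ q).toReal).sum - 2⁻¹ * (μ q).toReal| := by
          have := abs_add_le ((u.map fun p => (μ (q ∩ p.1)).toReal).sum
            - (u.map fun p => p.2 * (μ q).toReal).sum)
            ((u.map fun p => p.2 * (μ q).toReal).sum - 2⁻¹ * (μ q).toReal)
          simpa using this
      _ ≤ u.length * η' + r ^ k := by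
          refine add_le_add habs ?_
          rw [hwsum]
          exact hhalf
      _ ≤ η / 2 + η / 2 := add_le_add hulenbd hk.le
      _ = η := by ring
  · intro γ hγ
    have hsub : symmDiff (f γ '' A) A ⊆ ⋃ s ∈ (u.map fun p => symmDiff (f γ '' p.1) p.1), s := by
      have himg : f γ '' A = ⋃ p ∈ u, f γ '' p.1 := by
        rw [hA]
        simp only [Set.image_iUnion]
      intro x hx
      rw [Set.mem_symmDiff, himg] at hx
      simp only [Set.mem_iUnion, List.mem_map, hA, Set.mem_symmDiff] at hx ⊢
      rcases hx with ⟨⟨p, hp, hxp⟩, hxn⟩ | ⟨⟨p, hp, hxp⟩, hxn⟩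
      · refine ⟨symmDiff (f γ '' p.1) p.1, ⟨p, hp, rfl⟩, ?_⟩
        rw [Set.mem_symmDiff]
        exact Or.inl ⟨hxp, fun hc => hxn ⟨p, hp, hc⟩⟩
      · refine ⟨symmDiff (f γ '' p.1) p.1, ⟨p, hp, rfl⟩, ?_⟩
        rw [Set.mem_symmDiff]
        exact Or.inr ⟨hxp, fun hc => hxn ⟨p, hp, hc⟩⟩
    calc (μ (symmDiff (f γ '' A) A)).toReal
        ≤ (μ (⋃ s ∈ (u.map fun p => symmDiff (f γ '' p.1) p.1), s)).toReal :=
          toReal_mono' hsub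
      _ ≤ (u.map fun p => symmDiff (f γ '' p.1) p.1).length * η' := by
          refine toReal_list_union_le η' hη'.le _ ?_
          rintro s hs
          obtain ⟨p, hp, rfl⟩ := List.mem_map.1 hs
          exact hinv p (humem p hp) γ hγ
      _ ≤ η := by
          rw [List.length_map]
          have h2 : (u.length : ℝ) * η' ≤ 2 ^ k * η' :=
            mul_le_mul_of_nonneg_right hulen hη'.le
          rw [hη'def] at h2 ⊢
          have h3 : (2:ℝ) ^ k * (η / (2 * 2 ^ k)) = η / 2 := by field_simp
          nlinarith [h2, h3, hη]


/-- Evaluation of the product with the uniform two point measure. -/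
theorem prod_measure_eval (μ : Measure X) (W : Set (X × Bool))
    (hWf : MeasurableSet {x | (x, false) ∈ W}) (hWt : MeasurableSet {x | (x, true) ∈ W}) :
    (μ.prod ((2 : ENNReal)⁻¹ • Measure.count)) W
      = μ {x | (x, false) ∈ W} * 2⁻¹ + μ {x | (x, true) ∈ W} * 2⁻¹ := by
  have hdecomp : W = ({x | (x, false) ∈ W} ×ˢ ({false} : Set Bool))
      ∪ ({x | (x, true) ∈ W} ×ˢ ({true} : Set Bool)) := by
    ext ⟨x, b⟩
    cases b <;> simp
  have hdisj : Disjoint ({x | (x, false) ∈ W} ×ˢ ({false} : Set Bool))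
      (({x | (x, true) ∈ W} ×ˢ ({true} : Set Bool))) := by
    rw [Set.disjoint_left]
    rintro ⟨x, b⟩ ⟨-, hb⟩ ⟨-, hb'⟩
    simp only [Set.mem_singleton_iff] at hb hb'
    rw [hb'] at hb
    exact Bool.noConfusion hb
  have hcnt : ((2 : ENNReal)⁻¹ • Measure.count) ({false} : Set Bool) = 2⁻¹ := by
    rw [Measure.smul_apply, Measure.count_singleton, smul_eq_mul, mul_one]
  have hcnt' : ((2 : ENNReal)⁻¹ • Measure.count) ({true} : Set Bool) = 2⁻¹ := by
    rw [Measure.smul_apply, Measure.count_singleton, smul_eq_mul, mul_one]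
  conv_lhs => rw [hdecomp]
  rw [measure_union hdisj (hWt.prod (measurableSet_singleton _)),
    Measure.prod_prod, Measure.prod_prod, hcnt, hcnt']

/-- sections of the image of the diagonal action -/
theorem sec_image (hf : IsPMPAction f μ) (γ : Γ) (Y : Set (X × Bool)) (b : Bool) :
    {x | (x, b) ∈ (fun p : X × Bool => (f γ p.1, p.2)) '' Y}
      = f γ '' {a | (a, b) ∈ Y} := by
  ext x
  constructor
  · rintro ⟨⟨a, b'⟩, hp, heq⟩
    obtain ⟨h1, h2⟩ := Prod.mk.injEq .. ▸ heq
    subst h2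
    exact ⟨a, hp, h1⟩
  · rintro ⟨a, ha, rfl⟩
    exact ⟨(a, b), ha, rfl⟩

theorem main [Countable Γ] [StandardBorelSpace X] [IsProbabilityMeasure μ]
    (hf : IsPMPAction f μ) (herg : IsErgodicAction f μ)
    (hnse : ¬ IsStronglyErgodic f μ) :
    WeaklyContains f μ (fun γ (p : X × Bool) => (f γ p.1, p.2))
      (μ.prod ((2 : ENNReal)⁻¹ • Measure.count)) := by
  classical
  have h1 : ¬ ∀ A : ℕ → Set X, (∀ n, MeasurableSet (A n)) →
      AlmostInvariantSeq f μ A → TrivialSeq μ A := fun h => hnse ⟨herg, h⟩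
  push_neg at h1
  obtain ⟨Aseq, hAm, hai, hnt⟩ := h1
  obtain ⟨c, hc0, hc1, hap⟩ := exists_approx hf herg Aseq hAm hai hnt
  intro n Ys hYs S ε hε
  set B : Fin n → Set X := fun i => {x | (x, false) ∈ Ys i} with hB
  set C : Fin n → Set X := fun i => {x | (x, true) ∈ Ys i} with hC
  have hBm : ∀ i, MeasurableSet (B i) :=
    fun i => (hYs i).preimage (measurable_id.prodMk measurable_const)
  have hCm : ∀ i, MeasurableSet (C i) :=
    fun i => (hYs i).preimage (measurable_id.prodMk measurable_const)
  set Q : Finset (Set X) :=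
    ((S ×ˢ (Finset.univ : Finset (Fin n × Fin n))).image
        fun z => f z.1 '' B z.2.1 ∩ B z.2.2) ∪
      ((S ×ˢ (Finset.univ : Finset (Fin n × Fin n))).image
        fun z => f z.1 '' C z.2.1 ∩ C z.2.2) with hQdef
  have hQm : ∀ q ∈ Q, MeasurableSet q := by
    intro q hq
    rw [hQdef, Finset.mem_union] at hq
    rcases hq with hq | hq <;>
      · obtain ⟨⟨γ, i, j⟩, -, rfl⟩ := Finset.mem_image.1 hq
        first
          | exact (measurableSet_image hf γ (hBm i)).inter (hBm j)
          | exact (measurableSet_image hf γ (hCm i)).inter (hCm j)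
  obtain ⟨A, hAmeas, hAappx, hAinv⟩ := half hf hc0 hc1 hap Q hQm S (ε / 4) (by linarith)
  refine ⟨fun i => (B i ∩ A) ∪ (C i \ A),
    fun i => ((hBm i).inter hAmeas).union ((hCm i).diff hAmeas), ?_⟩
  intro i j γ hγ
  set K := f γ '' B i ∩ B j with hK
  set L := f γ '' C i ∩ C j with hL
  have hKQ : K ∈ Q := by
    rw [hQdef, Finset.mem_union]
    exact Or.inl (Finset.mem_image.2 ⟨(γ, i, j), by simp [hγ], rfl⟩)
  have hLQ : L ∈ Q := by
    rw [hQdef, Finset.mem_union]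
    exact Or.inr (Finset.mem_image.2 ⟨(γ, i, j), by simp [hγ], rfl⟩)
  have hKm : MeasurableSet K := hQm K hKQ
  have hLm : MeasurableSet L := hQm L hLQ
  -- the right hand side
  have hRHS : ((μ.prod ((2 : ENNReal)⁻¹ • Measure.count))
      ((fun p : X × Bool => (f γ p.1, p.2)) '' Ys i ∩ Ys j)).toReal
      = 2⁻¹ * (μ K).toReal + 2⁻¹ * (μ L).toReal := by
    have hsecf : {x | (x, false) ∈ (fun p : X × Bool => (f γ p.1, p.2)) '' Ys i ∩ Ys j} = K := by
      rw [hK]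
      have : {x | (x, false) ∈ (fun p : X × Bool => (f γ p.1, p.2)) '' Ys i ∩ Ys j}
          = {x | (x, false) ∈ (fun p : X × Bool => (f γ p.1, p.2)) '' Ys i} ∩ B j := rfl
      rw [this, sec_image hf γ (Ys i) false]
    have hsect : {x | (x, true) ∈ (fun p : X × Bool => (f γ p.1, p.2)) '' Ys i ∩ Ys j} = L := by
      rw [hL]
      have : {x | (x, true) ∈ (fun p : X × Bool => (f γ p.1, p.2)) '' Ys i ∩ Ys j}
          = {x | (x, true) ∈ (fun p : X × Bool => (f γ p.1, p.2)) '' Ys i} ∩ C j := rfl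
      rw [this, sec_image hf γ (Ys i) true]
    rw [prod_measure_eval μ _ (by rw [hsecf]; exact hKm) (by rw [hsect]; exact hLm),
      hsecf, hsect, ENNReal.toReal_add (by finiteness) (by finiteness),
      ENNReal.toReal_mul, ENNReal.toReal_mul]
    simp [mul_comm]
  -- the left hand side
  have hinj := injective hf γ
  set A' := f γ '' A with hA'
  set F : Set X → Set X := fun P =>
    ((f γ '' B i ∩ P) ∪ (f γ '' C i \ P)) ∩ ((B j ∩ A) ∪ (C j \ A)) with hF
  have hW : f γ '' ((B i ∩ A) ∪ (C i \ A)) ∩ ((B j ∩ A) ∪ (C j \ A)) = F A' := by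
    rw [hF, hA', Set.image_union, Set.image_inter hinj, Set.image_diff hinj]
  have hFA : F A = (K ∩ A) ∪ (L \ A) := by
    ext x
    simp only [hF, hK, hL, Set.mem_inter_iff, Set.mem_union, Set.mem_diff]
    tauto
  have hFmeas : ∀ P : Set X, MeasurableSet P → MeasurableSet (F P) := by
    intro P hP
    exact (((measurableSet_image hf γ (hBm i)).inter hP).union
      ((measurableSet_image hf γ (hCm i)).diff hP)).inter
      (((hBm j).inter hAmeas).union ((hCm j).diff hAmeas))
  have hstep1 : |(μ (F A')).toReal - (μ (F A)).toReal| ≤ ε / 4 := by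
    refine le_trans (abs_toReal_sub_le _ _) (le_trans ?_ (hAinv γ hγ))
    refine ENNReal.toReal_mono (measure_ne_top _ _) (measure_mono ?_)
    intro x hx
    simp only [Set.mem_symmDiff, hF, hA', Set.mem_inter_iff, Set.mem_union,
      Set.mem_diff] at hx ⊢
    tauto
  have hstep3 : (μ (F A)).toReal = (μ (K ∩ A)).toReal + (μ (L \ A)).toReal := by
    rw [hFA, measure_union ?_ (hLm.diff hAmeas),
      ENNReal.toReal_add (measure_ne_top _ _) (measure_ne_top _ _)]
    rw [Set.disjoint_left]
    rintro x ⟨-, hxA⟩ ⟨-, hxA'⟩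
    exact hxA' hxA
  have hdiffL : (μ (L \ A)).toReal = (μ L).toReal - (μ (L ∩ A)).toReal := by
    have h6 := measure_inter_add_diff (μ := μ) L hAmeas
    have h7 : (μ (L ∩ A)).toReal + (μ (L \ A)).toReal = (μ L).toReal := by
      rw [← ENNReal.toReal_add (measure_ne_top _ _) (measure_ne_top _ _), h6]
    linarith
  have h4 := hAappx K hKQ
  have h5 := hAappx L hLQ
  have hgoal : |(μ (F A')).toReal
      - (2⁻¹ * (μ K).toReal + 2⁻¹ * (μ L).toReal)| < ε := by
    have b1 := abs_le.1 hstep1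
    have b4 := abs_le.1 h4
    have b5 := abs_le.1 h5
    rw [abs_lt]
    constructor <;> [skip; skip] <;>
      · rw [hstep3, hdiffL] at b1
        cases b1 with
        | intro b1l b1r =>
          cases b4 with
          | intro b4l b4r =>
            cases b5 with
            | intro b5l b5r => linarith
  have hfinal : f γ '' ((B i ∩ A) ∪ (C i \ A)) ∩ ((B j ∩ A) ∪ (C j \ A)) = F A' := hW
  calc |(μ (f γ '' ((B i ∩ A) ∪ (C i \ A)) ∩ ((B j ∩ A) ∪ (C j \ A)))).toReal
        - ((μ.prod ((2 : ENNReal)⁻¹ • Measure.count))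
            ((fun p : X × Bool => (f γ p.1, p.2)) '' Ys i ∩ Ys j)).toReal|
      = |(μ (F A')).toReal - (2⁻¹ * (μ K).toReal + 2⁻¹ * (μ L).toReal)| := by
        rw [hfinal, hRHS]
    _ < ε := hgoal


end JS

/-- **Claim.** If an ergodic p.m.p. action `f` is not strongly ergodic, then `f` weakly
contains `f × b`, the diagonal product of `f` with the trivial action on two points with
equal mass. -/
theorem weaklyContains_prod_two_points_of_not_stronglyErgodic
    {Γ : Type*} [Group Γ] [Countable Γ]
    {X : Type*} [MeasurableSpace X] [StandardBorelSpace X]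
    (μ : Measure X) [IsProbabilityMeasure μ]
    (f : Γ → X → X) (hf : IsPMPAction f μ) (herg : IsErgodicAction f μ)
    (hnse : ¬ IsStronglyErgodic f μ) :
    WeaklyContains f μ (fun γ (p : X × Bool) => (f γ p.1, p.2))
      (μ.prod ((2 : ENNReal)⁻¹ • Measure.count)) :=
  JS.main hf herg hnse
end

section
/- Let f be an ergodic p.m.p. action of the countable group Γ by homeomorphisms on a compact metrizable space X with invariant Borel probability measure μ, let 0 < λ < 1, and let A_n be an almost invariant sequence of Borel sets with lim_{n→∞} μ(A_n) = λ. Define measures μ_n on X by μ_n(Y) = μ(A_n ∩ Y) for Borel Y ⊆ X. Then μ_n converges to λμ in the weak* topology. -/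
open MeasureTheory Filter Topology

section SchmidtHelpers

open scoped symmDiff

local notation "⟪" x ", " y "⟫" => @inner ℝ _ _ x y

variable {Γ : Type*} [Group Γ] [Countable Γ] {X : Type*} [MeasurableSpace X]
  {μ : MeasureTheory.Measure X} {f : Γ → X → X}

private lemma schmidt_null_or_conull [IsProbabilityMeasure μ]
    (hf : IsPMPAction f μ) (herg : IsErgodicAction f μ)
    {B : Set X} (hB : MeasurableSet B)
    (hae : ∀ γ : Γ, μ (symmDiff (f γ ⁻¹' B) B) = 0) :
    μ B = 0 ∨ μ B = 1 := by
  classical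
  set Bt : Set X := ⋂ γ : Γ, f γ ⁻¹' B with hBt
  have hBtm : MeasurableSet Bt := MeasurableSet.iInter fun γ => (hf.1 γ).measurable hB
  have hinv : ∀ δ : Γ, f δ ⁻¹' Bt = Bt := by
    intro δ
    ext x
    simp only [hBt, Set.mem_iInter, Set.mem_preimage]
    constructor
    · intro h γ
      have h2 := h (γ * δ⁻¹)
      rw [← hf.2.2] at h2
      rwa [inv_mul_cancel_right] at h2
    · intro h γ
      have h2 := h (γ * δ)
      rwa [hf.2.2] at h2
  have hsub : Bt ⊆ B := by
    intro x hx
    have h2 := Set.mem_iInter.1 hx 1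
    rwa [Set.mem_preimage, hf.2.1] at h2
  have hnull : μ (B \ Bt) = 0 := by
    have hsub2 : B \ Bt ⊆ ⋃ γ : Γ, symmDiff (f γ ⁻¹' B) B := by
      intro x hx
      obtain ⟨hxB, hxn⟩ := hx
      rw [hBt, Set.mem_iInter] at hxn
      push_neg at hxn
      obtain ⟨γ, hγ⟩ := hxn
      exact Set.mem_iUnion.2 ⟨γ, Set.mem_symmDiff.2 (Or.inr ⟨hxB, hγ⟩)⟩
    exact measure_mono_null hsub2 (measure_iUnion_null hae)
  have hμeq : μ B = μ Bt := by
    refine le_antisymm ?_ (measure_mono hsub)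
    calc μ B = μ (Bt ∪ B \ Bt) := by rw [Set.union_diff_cancel hsub]
    _ ≤ μ Bt + μ (B \ Bt) := measure_union_le _ _
    _ = μ Bt := by rw [hnull, add_zero]
  rw [hμeq]
  exact herg Bt hBtm hinv

private lemma schmidt_ae_nonpos [IsProbabilityMeasure μ]
    (hf : IsPMPAction f μ) (herg : IsErgodicAction f μ)
    {v : X → ℝ} (hv : Measurable v) (hvi : MeasureTheory.Integrable v μ)
    (hinv : ∀ γ : Γ, (fun x => v (f γ x)) =ᵐ[μ] v)
    (hint : ∫ x, v x ∂μ ≤ 0) : ∀ᵐ x ∂μ, v x ≤ 0 := by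
  have key : ∀ t : ℝ, 0 < t → μ {x | t < v x} = 0 := by
    intro t ht
    have hBm : MeasurableSet {x | t < v x} := measurableSet_lt measurable_const hv
    have hae : ∀ γ : Γ, μ (symmDiff (f γ ⁻¹' {x | t < v x}) {x | t < v x}) = 0 := by
      intro γ
      have hn : μ {x | ¬ v (f γ x) = v x} = 0 := by
        have h2 := hinv γ
        rwa [Filter.EventuallyEq, MeasureTheory.ae_iff] at h2
      refine measure_mono_null ?_ hn
      intro x hx
      rw [Set.mem_symmDiff] at hx
      simp only [Set.mem_preimage, Set.mem_setOf_eq] at hx ⊢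
      rcases hx with ⟨hx1, hx2⟩ | ⟨hx1, hx2⟩ <;> intro hcontra
      · rw [hcontra] at hx1; exact hx2 hx1
      · rw [← hcontra] at hx1; exact hx2 hx1
    rcases schmidt_null_or_conull hf herg hBm hae with h0 | h1
    · exact h0
    · exfalso
      have hcompl : μ {x | t < v x}ᶜ = 0 := by
        have h2 := measure_compl hBm (MeasureTheory.measure_ne_top μ _)
        rw [h1, MeasureTheory.measure_univ] at h2
        simpa using h2
      have hge : ∀ᵐ x ∂μ, t ≤ v x := by
        rw [MeasureTheory.ae_iff]
        refine measure_mono_null ?_ hcompl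
        intro x hx
        simp only [Set.mem_setOf_eq, not_le] at hx
        simp only [Set.mem_compl_iff, Set.mem_setOf_eq, not_lt]
        exact hx.le
      have hle : t ≤ ∫ x, v x ∂μ := by
        calc t = ∫ _, t ∂μ := by simp
        _ ≤ ∫ x, v x ∂μ :=
          MeasureTheory.integral_mono_ae (MeasureTheory.integrable_const t) hvi hge
      linarith
  have hnull : μ {x | 0 < v x} = 0 := by
    have hsub : {x | 0 < v x} ⊆ ⋃ k : ℕ, {x | 1 / ((k : ℝ) + 1) < v x} := by
      intro x hx
      simp only [Set.mem_setOf_eq] at hx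
      obtain ⟨k, hk⟩ := exists_nat_one_div_lt hx
      exact Set.mem_iUnion.2 ⟨k, hk⟩
    exact measure_mono_null hsub
      (MeasureTheory.measure_iUnion_null fun k => key _ (by positivity))
  rw [MeasureTheory.ae_iff]
  simpa [not_le] using hnull

private lemma schmidt_ae_zero [IsProbabilityMeasure μ]
    (hf : IsPMPAction f μ) (herg : IsErgodicAction f μ)
    {v : X → ℝ} (hv : Measurable v) (hvi : MeasureTheory.Integrable v μ)
    (hinv : ∀ γ : Γ, (fun x => v (f γ x)) =ᵐ[μ] v)
    (hint : ∫ x, v x ∂μ = 0) : v =ᵐ[μ] 0 := by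
  have h1 := schmidt_ae_nonpos hf herg hv hvi hinv hint.le
  have hinv' : ∀ γ : Γ, (fun x => -v (f γ x)) =ᵐ[μ] (fun x => -v x) := by
    intro γ
    filter_upwards [hinv γ] with x hx
    simp [hx]
  have h2 := schmidt_ae_nonpos hf herg hv.neg hvi.neg hinv'
    (by simp only [Pi.neg_apply]; rw [MeasureTheory.integral_neg, hint, neg_zero])
  filter_upwards [h1, h2] with x hx1 hx2
  simp only [Pi.zero_apply, Pi.neg_apply] at hx2 ⊢
  linarith

private lemma schmidt_diff_est {u : X → ℝ} [MeasureTheory.IsFiniteMeasure μ]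
    (hu : MeasureTheory.Integrable u μ) {C : ℝ}
    (hC : ∀ x, |u x| ≤ C)
    {S T : Set X} (hS : MeasurableSet S) (hT : MeasurableSet T) :
    |(∫ x in S, u x ∂μ) - ∫ x in T, u x ∂μ| ≤ C * (μ (symmDiff S T)).toReal := by
  have hsplit : ∀ {P Q : Set X}, MeasurableSet P → MeasurableSet Q →
      ∫ x in P, u x ∂μ = (∫ x in P ∩ Q, u x ∂μ) + ∫ x in P \ Q, u x ∂μ := by
    intro P Q hP hQ
    have h := MeasureTheory.setIntegral_union (f := u) (μ := μ) (s := P ∩ Q) (t := P \ Q)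
      (Set.disjoint_sdiff_right.mono_left Set.inter_subset_right) (hP.diff hQ)
      hu.integrableOn hu.integrableOn
    rw [Set.inter_union_diff] at h
    exact h

  have hest : ∀ {P : Set X}, |∫ x in P, u x ∂μ| ≤ C * (μ P).toReal := by
    intro P
    rw [← Real.norm_eq_abs]
    exact MeasureTheory.norm_setIntegral_le_of_norm_le_const
      (MeasureTheory.measure_lt_top μ P) (fun x _ => le_trans (le_of_eq (Real.norm_eq_abs (u x))) (hC x))
  have hSeq := hsplit hS hT
  have hTeq := hsplit hT hS
  rw [Set.inter_comm T S] at hTeq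
  have hkey : (∫ x in S, u x ∂μ) - ∫ x in T, u x ∂μ
      = (∫ x in S \ T, u x ∂μ) - ∫ x in T \ S, u x ∂μ := by
    rw [hSeq, hTeq]; ring
  have hμadd : (μ (symmDiff S T)).toReal = (μ (S \ T)).toReal + (μ (T \ S)).toReal := by
    rw [Set.symmDiff_def, MeasureTheory.measure_union disjoint_sdiff_sdiff (hT.diff hS),
      ENNReal.toReal_add (MeasureTheory.measure_ne_top μ _) (MeasureTheory.measure_ne_top μ _)]
  rw [hkey, hμadd, mul_add]
  calc |(∫ x in S \ T, u x ∂μ) - ∫ x in T \ S, u x ∂μ|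
      ≤ |∫ x in S \ T, u x ∂μ| + |∫ x in T \ S, u x ∂μ| := abs_sub _ _
  _ ≤ C * (μ (S \ T)).toReal + C * (μ (T \ S)).toReal := add_le_add hest hest

end SchmidtHelpers

/-- **Lemma (Schmidt).** Let `f` be an ergodic p.m.p. action by homeomorphisms on a compact
metrizable space, and `A n` an almost invariant sequence with `μ(A n) → λ`, `0 < λ < 1`.
Then the measures `μ_n(Y) = μ(A_n ∩ Y)` weak*-converge to `λ·μ`. -/
theorem restrict_almostInvariant_tendsto_smul
    {Γ : Type*} [Group Γ] [Countable Γ]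
    {X : Type*} [TopologicalSpace X] [CompactSpace X] [TopologicalSpace.MetrizableSpace X]
    [MeasurableSpace X] [BorelSpace X]
    (μ : Measure X) [IsProbabilityMeasure μ]
    (f : Γ → X → X) (hf : IsPMPAction f μ) (hcont : ∀ γ : Γ, Continuous (f γ))
    (hhomeo : ∀ γ : Γ, ∃ h : X ≃ₜ X, ⇑h = f γ)
    (herg : IsErgodicAction f μ)
    (lam : ℝ) (h0 : 0 < lam) (h1 : lam < 1)
    (A : ℕ → Set X) (hA : ∀ n, MeasurableSet (A n))
    (hai : AlmostInvariantSeq f μ A)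
    (hlim : Tendsto (fun n => (μ (A n)).toReal) atTop (nhds lam)) :
    ∀ g : X → ℝ, Continuous g →
      Tendsto (fun n => ∫ x, g x ∂(μ.restrict (A n))) atTop (nhds (lam * ∫ x, g x ∂μ)) := by
  intro g hg
  classical
  obtain ⟨Cg, hCg⟩ := isCompact_univ.exists_bound_of_continuousOn
    (hg.continuousOn (s := Set.univ))
  set c : ℝ := ∫ x, g x ∂μ with hc
  set u : X → ℝ := fun x => g x - c with hudef
  have hu_cont : Continuous u := hg.sub continuous_const
  set C : ℝ := Cg + |c| with hCdef
  have hu_bound : ∀ x, |u x| ≤ C := by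
    intro x
    have hx1 := hCg x (Set.mem_univ x)
    rw [Real.norm_eq_abs] at hx1
    calc |u x| = |g x - c| := rfl
    _ ≤ |g x| + |c| := abs_sub _ _
    _ ≤ Cg + |c| := by gcongr
  have hC0 : 0 ≤ C := by
    obtain ⟨x0, -⟩ := MeasureTheory.nonempty_of_measure_ne_zero
      (μ := μ) (s := Set.univ) (by simp)
    exact le_trans (abs_nonneg (u x0)) (hu_bound x0)
  have hg_mem : MemLp g 2 μ := MemLp.of_bound hg.aestronglyMeasurable Cg
    (Filter.Eventually.of_forall fun x => hCg x (Set.mem_univ x))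
  have hg_int : Integrable g μ := hg_mem.integrable one_le_two
  have hu_mem : MemLp u 2 μ := MemLp.of_bound hu_cont.aestronglyMeasurable C
    (Filter.Eventually.of_forall fun x => by rw [Real.norm_eq_abs]; exact hu_bound x)
  have hu_int : Integrable u μ := hu_mem.integrable one_le_two
  have hu_int0 : ∫ x, u x ∂μ = 0 := by
    have h2 : ∫ x, u x ∂μ = (∫ x, g x ∂μ) - ∫ _, c ∂μ := by
      simp only [hudef]
      exact integral_sub hg_int (integrable_const c)
    rw [h2, integral_const, probReal_univ]
    simp [hc]
  -- L² setup
  let T : Γ → (Lp ℝ 2 μ →ₗᵢ[ℝ] Lp ℝ 2 μ) := fun γ =>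
    Lp.compMeasurePreservingₗᵢ ℝ (f γ) (hf.1 γ)
  let U : Lp ℝ 2 μ := hu_mem.toLp u
  have hT_coe : ∀ (γ : Γ) (W : Lp ℝ 2 μ), ⇑(T γ W) =ᵐ[μ] (⇑W) ∘ (f γ) := fun γ W =>
    Lp.coeFn_compMeasurePreserving W (hf.1 γ)
  have hqmp : ∀ γ : Γ, Measure.QuasiMeasurePreserving (f γ) μ μ := fun γ =>
    (hf.1 γ).quasiMeasurePreserving
  have hT_comp : ∀ γ δ : Γ, T γ (T δ U) = T (δ * γ) U := by
    intro γ δ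
    apply Lp.ext
    have h2 : (⇑(T δ U)) ∘ (f γ) =ᵐ[μ] (⇑U ∘ f δ) ∘ (f γ) :=
      (hqmp γ).ae_eq_comp (hT_coe δ U)
    have h3 : (⇑U ∘ f δ) ∘ (f γ) = ⇑U ∘ (f (δ * γ)) := by
      funext x
      simp only [Function.comp_apply]
      rw [hf.2.2]
    rw [h3] at h2
    exact (((hT_coe γ (T δ U)).trans h2)).trans (hT_coe (δ * γ) U).symm
  set O : Set (Lp ℝ 2 μ) := Set.range (fun γ : Γ => T γ U) with hO
  set K : Set (Lp ℝ 2 μ) := closure (convexHull ℝ O) with hKdef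
  have hKconv : Convex ℝ K := (convex_convexHull ℝ O).closure
  have hKne : K.Nonempty := ⟨T 1 U, subset_closure (subset_convexHull ℝ O ⟨1, rfl⟩)⟩
  have hTK : ∀ (γ : Γ), ∀ w ∈ K, T γ w ∈ K := by
    intro γ w hw
    have h2 : ⇑(T γ) '' O ⊆ O := by
      rintro _ ⟨_, ⟨δ, rfl⟩, rfl⟩
      exact ⟨δ * γ, (hT_comp γ δ).symm⟩
    have h3 : ⇑(T γ) '' (convexHull ℝ O) ⊆ convexHull ℝ O := by
      have h4 := (T γ).toLinearMap.image_convexHull O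
      rw [LinearIsometry.coe_toLinearMap] at h4
      rw [h4]
      exact convexHull_mono h2
    have h5 : T γ w ∈ ⇑(T γ) '' (closure (convexHull ℝ O)) := ⟨w, hw, rfl⟩
    exact closure_mono h3 (image_closure_subset_closure_image (T γ).continuous h5)
  obtain ⟨v, hvK, hvmin⟩ :=
    exists_norm_eq_iInf_of_complete_convex hKne (isClosed_closure.isComplete) hKconv 0
  simp only [zero_sub, norm_neg] at hvmin
  have hbdd : BddBelow (Set.range fun w : K => ‖(w : Lp ℝ 2 μ)‖) := by
    refine ⟨0, ?_⟩
    rintro _ ⟨w, rfl⟩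
    exact norm_nonneg _
  have hδle : ∀ w ∈ K, ‖v‖ ≤ ‖w‖ := by
    intro w hw
    rw [hvmin]
    exact ciInf_le hbdd (⟨w, hw⟩ : K)
  have hfix : ∀ γ : Γ, T γ v = v := by
    intro γ
    have hb : T γ v ∈ K := hTK γ v hvK
    have hnb : ‖T γ v‖ = ‖v‖ := (T γ).norm_map v
    have hm : (1/2 : ℝ) • v + (1/2 : ℝ) • (T γ v) ∈ K :=
      hKconv hvK hb (by norm_num) (by norm_num) (by norm_num)
    have hm2 : ‖v‖ ≤ ‖(1/2 : ℝ) • v + (1/2 : ℝ) • (T γ v)‖ := hδle _ hm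
    have hmid : ‖(1/2 : ℝ) • v + (1/2 : ℝ) • (T γ v)‖ = ‖v + T γ v‖ / 2 := by
      rw [← smul_add, norm_smul, Real.norm_eq_abs,
        abs_of_nonneg (by norm_num : (0:ℝ) ≤ 1/2)]
      ring
    rw [hmid] at hm2
    have hpar := parallelogram_law_with_norm ℝ v (T γ v)
    have hsq : ‖v - T γ v‖ * ‖v - T γ v‖ ≤ 0 := by
      nlinarith [hpar, hnb, hm2, norm_nonneg v, norm_nonneg (v + T γ v)]
    have hz : ‖v - T γ v‖ = 0 :=
      le_antisymm (by nlinarith [norm_nonneg (v - T γ v)]) (norm_nonneg _)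
    exact (sub_eq_zero.1 (norm_eq_zero.1 hz)).symm
  have hvinv : ∀ γ : Γ, (fun x => (⇑v) (f γ x)) =ᵐ[μ] ⇑v := by
    intro γ
    have h2 : ⇑(T γ v) =ᵐ[μ] (⇑v) ∘ (f γ) := hT_coe γ v
    rw [hfix γ] at h2
    exact h2.symm
  have hvmeas : Measurable (⇑v) := (Lp.stronglyMeasurable v).measurable
  have hvint : Integrable (⇑v) μ := (Lp.memLp v).integrable one_le_two
  let J : Lp ℝ 2 μ := indicatorConstLp 2 MeasurableSet.univ (measure_ne_top μ _) (1 : ℝ)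
  have hJ : ∀ W : Lp ℝ 2 μ, @inner ℝ _ _ J W = ∫ x, W x ∂μ := by
    intro W
    rw [show J = indicatorConstLp 2 MeasurableSet.univ (measure_ne_top μ _) (1:ℝ) from rfl,
      L2.inner_indicatorConstLp_one MeasurableSet.univ (measure_ne_top μ _) W,
      setIntegral_univ]
  have hTU_int : ∀ γ : Γ, @inner ℝ _ _ J (T γ U) = 0 := by
    intro γ
    rw [hJ]
    have h2 : ⇑(T γ U) =ᵐ[μ] fun x => u (f γ x) :=
      (hT_coe γ U).trans ((hqmp γ).ae_eq_comp (MemLp.coeFn_toLp hu_mem))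
    rw [integral_congr_ae h2]
    obtain ⟨e, he⟩ := hhomeo γ
    have hemb : MeasurableEmbedding (f γ) := he ▸ e.measurableEmbedding
    rw [(hf.1 γ).integral_comp hemb u]
    exact hu_int0
  have hJv : @inner ℝ _ _ J v = 0 := by
    have hclosed : IsClosed {w : Lp ℝ 2 μ | @inner ℝ _ _ J w = 0} :=
      isClosed_eq (continuous_const.inner continuous_id) continuous_const
    have hconv : Convex ℝ {w : Lp ℝ 2 μ | @inner ℝ _ _ J w = 0} := by
      intro a ha b hb s t hs ht hst
      simp only [Set.mem_setOf_eq] at ha hb ⊢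
      rw [inner_add_right, real_inner_smul_right, real_inner_smul_right, ha, hb]
      ring
    have hOsub : O ⊆ {w : Lp ℝ 2 μ | @inner ℝ _ _ J w = 0} := by
      rintro _ ⟨γ, rfl⟩
      exact hTU_int γ
    have hsub : K ⊆ {w : Lp ℝ 2 μ | @inner ℝ _ _ J w = 0} := by
      rw [hKdef]
      exact hclosed.closure_subset_iff.2 (convexHull_min hOsub hconv)
    exact hsub hvK
  have hvint0 : ∫ x, (⇑v) x ∂μ = 0 := by rw [← hJ v]; exact hJv
  have hv0 : v = 0 := Lp.ext
    ((schmidt_ae_zero hf herg hvmeas hvint hvinv hvint0).trans (Lp.coeFn_zero _ _ _).symm)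
  have h0K : (0 : Lp ℝ 2 μ) ∈ K := hv0 ▸ hvK
  have happrox : ∀ ε : ℝ, 0 < ε → ∃ h ∈ convexHull ℝ O, ‖h‖ < ε := by
    intro ε hε
    rw [hKdef] at h0K
    rcases Metric.mem_closure_iff.1 h0K ε hε with ⟨h, hh, hd⟩
    rw [dist_comm, dist_zero_right] at hd
    exact ⟨h, hh, hd⟩
  have hInner : ∀ (n : ℕ) (W : Lp ℝ 2 μ),
      @inner ℝ _ _ (indicatorConstLp 2 (hA n) (measure_ne_top μ _) (1 : ℝ) : Lp ℝ 2 μ) W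
        = ∫ x in A n, W x ∂μ := fun n W =>
    L2.inner_indicatorConstLp_one (hA n) (measure_ne_top μ _) W
  have hInnorm : ∀ n : ℕ,
      ‖(indicatorConstLp 2 (hA n) (measure_ne_top μ _) (1:ℝ) : Lp ℝ 2 μ)‖ ≤ 1 := by
    intro n
    rw [norm_indicatorConstLp two_ne_zero ENNReal.ofNat_ne_top, norm_one, one_mul]
    have h2 : (μ (A n)).toReal ≤ 1 := by
      rw [← ENNReal.toReal_one]
      exact ENNReal.toReal_mono ENNReal.one_ne_top prob_le_one
    exact Real.rpow_le_one ENNReal.toReal_nonneg h2 (by positivity)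
  have hInT : ∀ (n : ℕ) (γ : Γ),
      @inner ℝ _ _ (indicatorConstLp 2 (hA n) (measure_ne_top μ _) (1:ℝ) : Lp ℝ 2 μ) (T γ U)
        = ∫ x in f γ '' A n, u x ∂μ := by
    intro n γ
    rw [hInner]
    have h2 : ⇑(T γ U) =ᵐ[μ] fun x => u (f γ x) :=
      (hT_coe γ U).trans ((hqmp γ).ae_eq_comp (MemLp.coeFn_toLp hu_mem))
    rw [integral_congr_ae (ae_restrict_of_ae h2)]
    obtain ⟨e, he⟩ := hhomeo γ
    have hemb : MeasurableEmbedding (f γ) := he ▸ e.measurableEmbedding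
    exact ((hf.1 γ).setIntegral_image_emb hemb u (A n)).symm
  have hInU : ∀ n : ℕ,
      @inner ℝ _ _ (indicatorConstLp 2 (hA n) (measure_ne_top μ _) (1:ℝ) : Lp ℝ 2 μ) U
        = ∫ x in A n, u x ∂μ := by
    intro n
    rw [hInner]
    exact integral_congr_ae (ae_restrict_of_ae (MemLp.coeFn_toLp hu_mem))
  have hsymm : ∀ γ : Γ,
      Tendsto (fun n => (μ (symmDiff (f γ '' A n) (A n))).toReal) atTop (𝓝 0) := by
    intro γ
    have h2 := (ENNReal.tendsto_toReal (a := 0) (by simp)).comp (hai γ)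
    exact h2
  have hmain : Tendsto (fun n => ∫ x in A n, u x ∂μ) atTop (𝓝 0) := by
    rw [Metric.tendsto_atTop]
    intro ε hε
    obtain ⟨h, hh, hhn⟩ := happrox (ε/2) (by linarith)
    rw [convexHull_eq] at hh
    obtain ⟨ι, t, w, z, hw0, hw1, hzO, hcm⟩ := hh
    have hrep : h = ∑ i ∈ t, w i • z i := by
      rw [← hcm, Finset.centerMass_eq_of_sum_1 t z hw1]
    let γfun : ι → Γ := fun i => if hi : ∃ γ : Γ, T γ U = z i then hi.choose else 1
    have hγfun : ∀ i ∈ t, T (γfun i) U = z i := by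
      intro i hi
      have hex : ∃ γ : Γ, T γ U = z i := hzO i hi
      simp only [γfun, dif_pos hex]
      exact hex.choose_spec
    have hev : ∀ i ∈ t, ∀ᶠ n in atTop,
        C * (μ (symmDiff (f (γfun i) '' A n) (A n))).toReal < ε / 2 := by
      intro i _
      have h2 : Tendsto (fun n => C * (μ (symmDiff (f (γfun i) '' A n) (A n))).toReal)
          atTop (𝓝 (C * 0)) := (hsymm (γfun i)).const_mul C
      rw [mul_zero] at h2
      exact h2.eventually_lt_const (by linarith)
    obtain ⟨N, hN⟩ := Filter.eventually_atTop.1 ((Filter.eventually_all_finset t).2 hev)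
    refine ⟨N, fun n hn => ?_⟩
    have hbound := hN n hn
    set In : Lp ℝ 2 μ := indicatorConstLp 2 (hA n) (measure_ne_top μ _) (1:ℝ) with hIn
    have hdecomp : @inner ℝ _ _ In U
        = (∑ i ∈ t, w i * @inner ℝ _ _ In (U - z i)) + @inner ℝ _ _ In h := by
      rw [hrep, inner_sum]
      simp only [real_inner_smul_right, inner_sub_right]
      rw [← Finset.sum_add_distrib]
      have h3 : ∀ i ∈ t,
          w i * (@inner ℝ _ _ In U - @inner ℝ _ _ In (z i)) + w i * @inner ℝ _ _ In (z i)
            = w i * @inner ℝ _ _ In U := fun i _ => by ring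
      rw [Finset.sum_congr rfl h3, ← Finset.sum_mul, hw1, one_mul]
    have habs1 : |@inner ℝ _ _ In h| < ε / 2 := by
      calc |@inner ℝ _ _ In h| ≤ ‖In‖ * ‖h‖ := abs_real_inner_le_norm In h
      _ ≤ 1 * ‖h‖ := mul_le_mul_of_nonneg_right (hInnorm n) (norm_nonneg h)
      _ = ‖h‖ := one_mul _
      _ < ε / 2 := hhn
    have habs2 : ∀ i ∈ t, |@inner ℝ _ _ In (U - z i)| < ε / 2 := by
      intro i hi
      rw [inner_sub_right, ← hγfun i hi, hIn, hInU, hInT]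
      obtain ⟨e, he⟩ := hhomeo (γfun i)
      have hemb : MeasurableEmbedding (f (γfun i)) := he ▸ e.measurableEmbedding
      have hmeasim : MeasurableSet (f (γfun i) '' A n) := hemb.measurableSet_image.2 (hA n)
      have h4 := schmidt_diff_est (μ := μ) hu_int hu_bound hmeasim (hA n)
      rw [abs_sub_comm]
      exact lt_of_le_of_lt h4 (hbound i hi)
    rw [Real.dist_eq, sub_zero, ← hInU n, ← hIn, hdecomp]
    calc |(∑ i ∈ t, w i * @inner ℝ _ _ In (U - z i)) + @inner ℝ _ _ In h|
        ≤ |∑ i ∈ t, w i * @inner ℝ _ _ In (U - z i)| + |@inner ℝ _ _ In h| := abs_add_le _ _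
    _ ≤ (∑ i ∈ t, w i * |@inner ℝ _ _ In (U - z i)|) + |@inner ℝ _ _ In h| := by
        refine add_le_add ?_ le_rfl
        refine (Finset.abs_sum_le_sum_abs _ _).trans ?_
        refine Finset.sum_le_sum fun i hi => ?_
        rw [abs_mul, abs_of_nonneg (hw0 i hi)]
    _ < ε := by
        have h5 : ∑ i ∈ t, w i * |@inner ℝ _ _ In (U - z i)| ≤ ∑ i ∈ t, w i * (ε / 2) :=
          Finset.sum_le_sum fun i hi =>
            mul_le_mul_of_nonneg_left (habs2 i hi).le (hw0 i hi)
        have h6 : ∑ i ∈ t, w i * (ε / 2) = ε / 2 := by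
          rw [← Finset.sum_mul, hw1, one_mul]
        linarith [habs1]
  have hfinal : ∀ n, (∫ x in A n, g x ∂μ) = (∫ x in A n, u x ∂μ) + c * (μ (A n)).toReal := by
    intro n
    have h2 : (∫ x in A n, u x ∂μ) = (∫ x in A n, g x ∂μ) - ∫ _ in A n, c ∂μ := by
      simp only [hudef]
      exact integral_sub hg_int.integrableOn (integrable_const c).integrableOn
    rw [h2, setIntegral_const, smul_eq_mul, measureReal_def]
    ring
  have hconv2 : Tendsto (fun n => (∫ x in A n, u x ∂μ) + c * (μ (A n)).toReal)
      atTop (𝓝 (0 + c * lam)) := hmain.add (hlim.const_mul c)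
  rw [zero_add] at hconv2
  have hgoal := hconv2.congr (fun n => (hfinal n).symm)
  rw [mul_comm lam c]
  exact hgoal
end
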